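/- arXiv:2509.01115 — 7 statements merged into one kernel-verified Lean document; each statement's English description precedes it below -/
import Mathlib

section
/- Let M be a set equipped with two metrics d and θ, and let η : [0,∞) → [0,∞) be a homeomorphism with η(0)=0 such that θ(x,y)/θ(x,z) ≤ η(d(x,y)/d(x,z)) for all x,y,z ∈ M with x ≠ z (i.e. d and θ are η-quasisymmetric). Assume (M,d) is K-uniformly perfect for some K ∈ (1,∞). Let N ⊆ M and let T : M × Set M → [0,∞] be monotone in its second argument, i.e. T(y,U) ≤ T(y,U') whenever U ⊆ U'. If T satisfies condition (E_M) with respect to d with exceptional set N, then T satisfies condition (E_M) with respect to θ with the same exceptional set N. -/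
open Set

/-- Open ball for an abstract distance function `ρ`. -/
def ballOf {M : Type*} (ρ : M → M → ℝ) (x : M) (r : ℝ) : Set M :=
  {y | ρ x y < r}

/-- Diameter (in `[0,∞]`) of `M` under an abstract distance function `ρ`. -/
noncomputable def diamOf {M : Type*} (ρ : M → M → ℝ) : ENNReal :=
  ⨆ x : M, ⨆ y : M, ENNReal.ofReal (ρ x y)

/-- Condition (E_M) for an abstract exit-time functional `T` with respect to the
distance `ρ` and the exceptional set `N`: there exist `C > 0`, `A > 1` and
`σ ∈ (0,1)` such that for all `x ∈ M \ N` and all radii `r ∈ (0, σ·diam_ρ(M))`,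
`C · sup_{y ∈ B_ρ(x,r) \ N} T(y, B_ρ(x,r)) ≤ T(x, B_ρ(x,Ar))`. -/
def CondEM {M : Type*} (ρ : M → M → ℝ) (N : Set M) (T : M → Set M → ENNReal) : Prop :=
  ∃ C A σ : ℝ, 0 < C ∧ 1 < A ∧ 0 < σ ∧ σ < 1 ∧
    ∀ x, x ∉ N → ∀ r : ℝ, 0 < r →
      ENNReal.ofReal r < ENNReal.ofReal σ * diamOf ρ →
      ENNReal.ofReal C * (⨆ y ∈ ballOf ρ x r \ N, T y (ballOf ρ x r)) ≤
        T x (ballOf ρ x (A * r))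

lemma exists_descent {M : Type*} (d : M → M → ℝ) (K : ℝ) (hK : 1 < K)
    (hUP : ∀ x : M, ∀ r : ℝ, 0 < r → ((ballOf d x r)ᶜ).Nonempty →
      (ballOf d x r \ ballOf d x (r / K)).Nonempty)
    (x u : M) (hu : 0 < d x u) :
    ∃ w : ℕ → M, w 0 = u ∧ ∀ n, d x (w n) / K ^ 2 ≤ d x (w (n + 1)) ∧
      d x (w (n + 1)) < d x (w n) / K := by
  have hK0 : 0 < K := lt_trans one_pos hK
  have step : ∀ v : {v : M // 0 < d x v},
      ∃ v', d x v.1 / K ^ 2 ≤ d x v' ∧ d x v' < d x v.1 / K := by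
    rintro ⟨v, hv⟩
    have hr : 0 < d x v / K := div_pos hv hK0
    have hne : ((ballOf d x (d x v / K))ᶜ).Nonempty := by
      refine ⟨v, ?_⟩
      simp only [mem_compl_iff, ballOf, mem_setOf_eq, not_lt]
      exact div_le_self hv.le hK.le
    obtain ⟨v', hv'⟩ := hUP x _ hr hne
    refine ⟨v', ?_, hv'.1⟩
    have h2 : ¬ d x v' < d x v / K / K := hv'.2
    rw [not_lt] at h2
    calc d x v / K ^ 2 = d x v / K / K := by rw [div_div, sq]
      _ ≤ d x v' := h2
  let stepS : {v : M // 0 < d x v} → {v : M // 0 < d x v} := fun v =>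
    ⟨(step v).choose,
      lt_of_lt_of_le (div_pos v.2 (pow_pos hK0 2)) (step v).choose_spec.1⟩
  let F : ℕ → {v : M // 0 < d x v} := fun n => stepS^[n] ⟨u, hu⟩
  refine ⟨fun n => (F n).1, ?_, fun n => ?_⟩
  · simp [F]
  · have hsucc : F (n + 1) = stepS (F n) := Function.iterate_succ_apply' stepS n _
    simp only []
    rw [hsucc]
    exact (step (F n)).choose_spec


set_option maxHeartbeats 1000000 in
/-- Condition (E_M) is invariant under quasi-symmetric changes of metric on
uniformly perfect spaces. -/
theorem em_invariant_under_quasisymmetry {M : Type*} (d θ : M → M → ℝ)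
    -- `d` is a metric on `M`
    (hd_self : ∀ x, d x x = 0) (hd_symm : ∀ x y, d x y = d y x)
    (hd_tri : ∀ x y z, d x z ≤ d x y + d y z)
    (hd_eq : ∀ x y, d x y = 0 → x = y)
    -- `θ` is a metric on `M`
    (hθ_self : ∀ x, θ x x = 0) (hθ_symm : ∀ x y, θ x y = θ y x)
    (hθ_tri : ∀ x y z, θ x z ≤ θ x y + θ y z)
    (hθ_eq : ∀ x y, θ x y = 0 → x = y)
    -- `η : [0,∞) → [0,∞)` is a homeomorphism with `η(0) = 0`
    (η : ℝ → ℝ) (hη0 : η 0 = 0)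
    (hη_mono : StrictMonoOn η (Ici 0))
    (hη_surj : ∀ y : ℝ, 0 ≤ y → ∃ t : ℝ, 0 ≤ t ∧ η t = y)
    -- `θ` and `d` are `η`-quasisymmetric
    (hQS : ∀ x y z : M, x ≠ z → θ x y / θ x z ≤ η (d x y / d x z))
    -- `(M,d)` is `K`-uniformly perfect for some `K ∈ (1,∞)`
    (K : ℝ) (hK : 1 < K)
    (hUP : ∀ x : M, ∀ r : ℝ, 0 < r → ((ballOf d x r)ᶜ).Nonempty →
      (ballOf d x r \ ballOf d x (r / K)).Nonempty)
    -- the exceptional set and the monotone exit-time functional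
    (N : Set M) (T : M → Set M → ENNReal)
    (hT_mono : ∀ y : M, ∀ U U' : Set M, U ⊆ U' → T y U ≤ T y U')
    -- (E_M) holds with respect to `d`
    (hEM : CondEM d N T) :
    CondEM θ N T := by
  have hK0 : 0 < K := lt_trans one_pos hK
  -- basic metric facts
  have dnn : ∀ a b : M, 0 ≤ d a b := by
    intro a b
    have h1 := hd_tri a b a
    rw [hd_self a, hd_symm b a] at h1
    linarith
  have θnn : ∀ a b : M, 0 ≤ θ a b := by
    intro a b
    have h1 := hθ_tri a b a
    rw [hθ_self a, hθ_symm b a] at h1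
    linarith
  have dpos : ∀ a b : M, a ≠ b → 0 < d a b := fun a b h =>
    (dnn a b).lt_of_ne (fun e => h (hd_eq a b e.symm))
  have θpos : ∀ a b : M, a ≠ b → 0 < θ a b := fun a b h =>
    (θnn a b).lt_of_ne (fun e => h (hθ_eq a b e.symm))
  -- basic η facts
  have ηmono : ∀ a b : ℝ, 0 ≤ a → a ≤ b → η a ≤ η b := fun a b ha hab =>
    hη_mono.monotoneOn (Set.mem_Ici.2 ha) (Set.mem_Ici.2 (ha.trans hab)) hab
  have ηlt : ∀ a b : ℝ, 0 ≤ a → 0 ≤ b → η a < η b → a < b := by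
    intro a b ha hb h
    by_contra hc
    push_neg at hc
    exact absurd (ηmono b a hb hc) (not_le.2 h)
  have ηnonneg : ∀ t : ℝ, 0 ≤ t → 0 ≤ η t := fun t ht => hη0 ▸ ηmono 0 t le_rfl ht
  have ηposv : ∀ t : ℝ, 0 < t → 0 < η t := fun t ht =>
    hη0 ▸ hη_mono (Set.mem_Ici.2 le_rfl) (Set.mem_Ici.2 ht.le) ht
  -- constants
  obtain ⟨C, A, σ, hC, hA, hσ0, hσ1, hmain⟩ := hEM
  obtain ⟨δ₀, hδ₀nn, hδ₀⟩ := hη_surj 1 zero_le_one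
  have hδ₀pos : 0 < δ₀ := by
    rcases hδ₀nn.lt_or_eq with h | h
    · exact h
    · exfalso; rw [← h, hη0] at hδ₀; norm_num at hδ₀
  set K' : ℝ := max (η (K ^ 2)) 1 with hK'def
  have hK'1 : (1 : ℝ) ≤ K' := le_max_right _ _
  have hK'pos : 0 < K' := lt_of_lt_of_le one_pos hK'1
  set δ₁ : ℝ := 1 / (σ * δ₀) + 1 with hδ₁def
  have hδ₁pos : 0 < δ₁ := by positivity
  have hηδ₁nn : 0 ≤ η δ₁ := ηnonneg δ₁ hδ₁pos.le
  set e₁ : ℝ := η δ₁ + 1 with he₁def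
  have he₁pos : 0 < e₁ := by positivity
  set σ' : ℝ := min (1 / 2) (1 / (2 * K' * e₁)) with hσ'def
  have hσ'pos : 0 < σ' := lt_min (by norm_num) (by positivity)
  have hσ'half : σ' ≤ 1 / 2 := min_le_left _ _
  have hσ'le : σ' * (2 * K' * e₁) ≤ 1 := by
    have h1 : σ' ≤ 1 / (2 * K' * e₁) := min_le_right _ _
    rw [le_div_iff₀ (by positivity)] at h1
    linarith
  have hσ'K : 2 * K' * σ' ≤ 1 := by nlinarith
  set A' : ℝ := η (A / δ₀) * K' + 2 with hA'def
  have hηA : 0 < η (A / δ₀) := ηposv _ (by positivity)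
  have hA'1 : 1 < A' := by
    have h := mul_pos hηA hK'pos
    rw [hA'def]
    linarith
  refine ⟨C, A', σ', hC, hA'1, hσ'pos, by linarith, ?_⟩
  intro x hxN r hr hrdiam
  -- Step 1: find u far from x in θ
  have hdiam : ENNReal.ofReal (r / σ') < diamOf θ := by
    by_contra hcon
    push_neg at hcon
    have h1 : ENNReal.ofReal σ' * diamOf θ ≤ ENNReal.ofReal σ' * ENNReal.ofReal (r / σ') :=
      mul_le_mul_right hcon _
    rw [← ENNReal.ofReal_mul hσ'pos.le, mul_comm σ' (r / σ'),
      div_mul_cancel₀ r (ne_of_gt hσ'pos)] at h1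
    exact absurd (lt_of_lt_of_le hrdiam h1) (lt_irrefl _)
  obtain ⟨p, q, hpq⟩ : ∃ p q : M, r / σ' < θ p q := by
    by_contra hc
    push_neg at hc
    have : diamOf θ ≤ ENNReal.ofReal (r / σ') := by
      simp only [diamOf]
      exact iSup_le fun p => iSup_le fun q => ENNReal.ofReal_le_ofReal (hc p q)
    exact absurd (lt_of_lt_of_le hdiam this) (lt_irrefl _)
  have hsum : r / σ' < θ x p + θ x q := by
    have h1 := hθ_tri p x q
    rw [hθ_symm p x] at h1
    linarith
  obtain ⟨u, hu⟩ : ∃ u : M, r / σ' < 2 * θ x u := by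
    rcases le_total (θ x p) (θ x q) with h | h
    · exact ⟨q, by linarith⟩
    · exact ⟨p, by linarith⟩
  have hrσ' : r < 2 * θ x u * σ' := by
    rw [div_lt_iff₀ hσ'pos] at hu
    linarith
  have hθupos : 0 < θ x u := by nlinarith
  have hxu : x ≠ u := by
    intro h; rw [← h, hθ_self] at hθupos; exact lt_irrefl _ hθupos
  have hdxu : 0 < d x u := dpos x u hxu
  -- u is outside the K'r ball:
  have hKru : K' * r ≤ θ x u := by nlinarith
  -- Step 2: descend to find z with r ≤ θ x z < K' * r
  obtain ⟨w, hw0, hwstep⟩ := exists_descent d K hK hUP x u hdxu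
  have hwpos : ∀ n, 0 < d x (w n) := by
    intro n
    induction n with
    | zero => rw [hw0]; exact hdxu
    | succ m ih => exact lt_of_lt_of_le (by positivity) (hwstep m).1
  have hxw : ∀ n, x ≠ w n := by
    intro n h
    have := hwpos n
    rw [← h, hd_self] at this
    exact lt_irrefl _ this
  have hθwpos : ∀ n, 0 < θ x (w n) := fun n => θpos x (w n) (hxw n)
  have hdecay : ∀ n, d x (w n) ≤ d x u / K ^ n := by
    intro n
    induction n with
    | zero => rw [hw0]; simp
    | succ m ih =>
      calc d x (w (m + 1)) ≤ d x (w m) / K := (hwstep m).2.le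
        _ ≤ d x u / K ^ m / K := (div_le_div_iff_of_pos_right hK0).2 ih
        _ = d x u / K ^ (m + 1) := by rw [div_div, ← pow_succ]
  have hθbound : ∀ n, θ x (w n) ≤ η (1 / K ^ n) * θ x u := by
    intro n
    have hratio : d x (w n) / d x u ≤ 1 / K ^ n := by
      rw [div_le_div_iff₀ hdxu (pow_pos hK0 n)]
      have := (le_div_iff₀ (pow_pos hK0 n)).mp (hdecay n)
      linarith
    have h1 := hQS x (w n) u hxu
    have h2 : η (d x (w n) / d x u) ≤ η (1 / K ^ n) :=
      ηmono _ _ (div_nonneg (dnn _ _) (dnn _ _)) hratio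
    rw [div_le_iff₀ hθupos] at h1
    have h3 := mul_le_mul_of_nonneg_right h2 hθupos.le
    linarith
  -- there is some n with θ x (w n) < K' * r
  have hex : ∃ n, θ x (w n) < K' * r := by
    obtain ⟨τ, hτnn, hτ⟩ := hη_surj (K' * r / (2 * θ x u)) (by positivity)
    have hτpos : 0 < τ := by
      rcases hτnn.lt_or_eq with h | h
      · exact h
      · exfalso
        rw [← h, hη0] at hτ
        have : (0:ℝ) < K' * r / (2 * θ x u) := by positivity
        rw [← hτ] at this
        exact lt_irrefl _ this
    obtain ⟨n, hn⟩ := pow_unbounded_of_one_lt (1 / τ) hK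
    refine ⟨n, ?_⟩
    have h1 : 1 / K ^ n ≤ τ := by
      rw [div_le_iff₀ (pow_pos hK0 n)]
      rw [div_lt_iff₀ hτpos] at hn
      nlinarith
    have h2 : η (1 / K ^ n) ≤ η τ := ηmono _ _ (by positivity) h1
    have h3 : θ x (w n) ≤ η τ * θ x u := by
      have h4 := hθbound n
      have h5 := mul_le_mul_of_nonneg_right h2 hθupos.le
      linarith
    have h4 : η τ * θ x u = K' * r / 2 := by
      rw [hτ]
      field_simp
    linarith [mul_pos hK'pos hr]
  -- first index entering the K'r-ball
  have hn0 : ¬ θ x (w 0) < K' * r := by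
    rw [hw0]; exact not_lt.2 hKru
  have hn : θ x (w (Nat.find hex)) < K' * r := Nat.find_spec hex
  have hnne : Nat.find hex ≠ 0 := by
    intro h
    rw [h] at hn
    exact hn0 hn
  obtain ⟨m, hm⟩ := Nat.exists_eq_succ_of_ne_zero hnne
  rw [Nat.succ_eq_add_one] at hm
  have hprev : K' * r ≤ θ x (w m) :=
    not_lt.1 (Nat.find_min hex (by omega))
  have hzlow : r ≤ θ x (w (Nat.find hex)) := by
    have hstep := (hwstep m).1
    rw [← hm] at hstep
    have hd1 : d x (w m) ≤ K ^ 2 * d x (w (Nat.find hex)) := by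
      rw [div_le_iff₀ (pow_pos hK0 2)] at hstep
      linarith
    have hratio : d x (w m) / d x (w (Nat.find hex)) ≤ K ^ 2 := by
      rw [div_le_iff₀ (hwpos _)]
      linarith
    have hq := hQS x (w m) (w (Nat.find hex)) (hxw _)
    have h2 : η (d x (w m) / d x (w (Nat.find hex))) ≤ K' :=
      le_trans (ηmono _ _ (div_nonneg (dnn _ _) (dnn _ _)) hratio) (le_max_left _ _)
    rw [div_le_iff₀ (hθwpos _)] at hq
    have h3 := mul_le_mul_of_nonneg_right h2 (hθwpos (Nat.find hex)).le
    have h4 : K' * r ≤ K' * θ x (w (Nat.find hex)) := by linarith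
    exact le_of_mul_le_mul_left h4 hK'pos
  obtain ⟨z, hxz, hz1, hz2⟩ : ∃ z : M, x ≠ z ∧ r ≤ θ x z ∧ θ x z < K' * r :=
    ⟨w (Nat.find hex), hxw _, hzlow, hn⟩
  have hdz : 0 < d x z := dpos x z hxz
  have hθz : 0 < θ x z := θpos x z hxz
  -- the comparison radius
  set s : ℝ := d x z / δ₀ with hsdef
  have hspos : 0 < s := div_pos hdz hδ₀pos
  -- (a) θ-ball inside d-ball of radius s
  have hsub1 : ballOf θ x r ⊆ ballOf d x s := by
    intro y hy
    simp only [ballOf, mem_setOf_eq] at hy ⊢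
    rcases eq_or_ne x y with hxy | hxy
    · rw [← hxy, hd_self]; exact hspos
    · have hθy : 0 < θ x y := θpos x y hxy
      have hq := hQS x z y hxy
      have hlt : 1 < θ x z / θ x y := (one_lt_div hθy).2 (lt_of_lt_of_le hy hz1)
      have h2 : η δ₀ < η (d x z / d x y) := by
        rw [hδ₀]; exact lt_of_lt_of_le hlt hq
      have h3 : δ₀ < d x z / d x y := ηlt _ _ hδ₀nn (div_nonneg (dnn _ _) (dnn _ _)) h2
      have hdy : 0 < d x y := dpos x y hxy
      rw [lt_div_iff₀ hdy] at h3
      rw [hsdef, lt_div_iff₀ hδ₀pos]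
      linarith
  -- (b) s is an admissible radius for d
  have hsσ : ENNReal.ofReal s < ENNReal.ofReal σ * diamOf d := by
    have hθu2 : (η δ₁ + 1) * θ x z < θ x u := by
      have h1 : e₁ * θ x z < e₁ * (K' * r) := mul_lt_mul_of_pos_left hz2 he₁pos
      have h2 : e₁ * K' * r < e₁ * K' * (2 * θ x u * σ') :=
        mul_lt_mul_of_pos_left hrσ' (mul_pos he₁pos hK'pos)
      have h3 : e₁ * K' * (2 * θ x u * σ') ≤ θ x u := by
        calc e₁ * K' * (2 * θ x u * σ') = θ x u * (σ' * (2 * K' * e₁)) := by ring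
          _ ≤ θ x u * 1 := mul_le_mul_of_nonneg_left hσ'le hθupos.le
          _ = θ x u := mul_one _
      rw [he₁def] at h1 h2 h3
      linarith
    have hq := hQS x u z hxz
    have h4 : η δ₁ < θ x u / θ x z := by
      rw [lt_div_iff₀ hθz]
      linarith
    have h5 : η δ₁ < η (d x u / d x z) := lt_of_lt_of_le h4 hq
    have h6 : δ₁ < d x u / d x z := ηlt _ _ hδ₁pos.le (div_nonneg (dnn _ _) (dnn _ _)) h5
    rw [lt_div_iff₀ hdz] at h6
    have h7 : s < σ * d x u := by
      rw [hsdef, div_lt_iff₀ hδ₀pos]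
      have h8 : 1 < σ * δ₀ * δ₁ := by
        rw [hδ₁def]
        have he : σ * δ₀ * (1 / (σ * δ₀) + 1) = 1 + σ * δ₀ := by
          field_simp
        rw [he]
        nlinarith [mul_pos hσ0 hδ₀pos]
      have h9 := mul_lt_mul_of_pos_left h6 (mul_pos hσ0 hδ₀pos)
      have h10 := mul_lt_mul_of_pos_right h8 hdz
      linarith
    have h11 : ENNReal.ofReal s < ENNReal.ofReal (σ * d x u) :=
      (ENNReal.ofReal_lt_ofReal_iff (by positivity)).2 h7
    have h12 : ENNReal.ofReal (σ * d x u) ≤ ENNReal.ofReal σ * diamOf d := by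
      rw [ENNReal.ofReal_mul hσ0.le]
      refine mul_le_mul_right ?_ _
      simp only [diamOf]
      exact le_iSup₂ (f := fun a b => ENNReal.ofReal (d a b)) x u
    exact lt_of_lt_of_le h11 h12
  -- (c) amplified d-ball inside amplified θ-ball
  have hsub2 : ballOf d x (A * s) ⊆ ballOf θ x (A' * r) := by
    intro y hy
    simp only [ballOf, mem_setOf_eq] at hy ⊢
    have hq := hQS x y z hxz
    have hratio : d x y / d x z < A / δ₀ := by
      rw [div_lt_div_iff₀ hdz hδ₀pos]
      rw [hsdef] at hy
      have h1 : d x y * δ₀ < A * (d x z / δ₀) * δ₀ := mul_lt_mul_of_pos_right hy hδ₀pos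
      have heq : A * (d x z / δ₀) * δ₀ = A * d x z := by field_simp
      linarith
    have h2 : η (d x y / d x z) ≤ η (A / δ₀) :=
      ηmono _ _ (div_nonneg (dnn _ _) (dnn _ _)) hratio.le
    rw [div_le_iff₀ hθz] at hq
    have h3 := mul_le_mul_of_nonneg_right h2 hθz.le
    have h4 : η (A / δ₀) * θ x z < η (A / δ₀) * (K' * r) := mul_lt_mul_of_pos_left hz2 hηA
    rw [hA'def]
    nlinarith [hr]
  -- final assembly
  have hsup : (⨆ y ∈ ballOf θ x r \ N, T y (ballOf θ x r)) ≤
      ⨆ y ∈ ballOf d x s \ N, T y (ballOf d x s) := by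
    refine iSup₂_le fun y hy => ?_
    exact le_iSup₂_of_le y ⟨hsub1 hy.1, hy.2⟩ (hT_mono y _ _ hsub1)
  calc ENNReal.ofReal C * (⨆ y ∈ ballOf θ x r \ N, T y (ballOf θ x r))
      ≤ ENNReal.ofReal C * (⨆ y ∈ ballOf d x s \ N, T y (ballOf d x s)) :=
        mul_le_mul_right hsup _
    _ ≤ T x (ballOf d x (A * s)) := hmain x hxN s hspos hsσ
    _ ≤ T x (ballOf θ x (A' * r)) := hT_mono x _ _ hsub2
end

section
/- Let (M,d) be a metric space with diameter R̄ ∈ (0,∞] and let W be a scale function on (M,d) with constants C_W ≥ 1 and 0 < β₁ ≤ β₂. Let N ⊆ M, let T : M × Set M → [0,∞], let λ : M × (0,∞) → [0,∞), and assume there exist constants A > 1, σ ∈ (0,1), C_M > 0 and C_λ > 0 such that: (i) 1 ≤ λ(x,r) · sup_{y ∈ B(x,r) \ N} T(y, B(x,r)) for all x ∈ M \ N and r ∈ (0, σR̄/A); (ii) λ(x,r) ≤ C_λ / W(x,r) for all x ∈ M and r ∈ (0, σR̄); (iii) C_M · sup_{y ∈ B(x,r) \ N} T(y, B(x,r)) ≤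 T(x, B(x,Ar)) for all x ∈ M \ N and r ∈ (0, σR̄/A). Then there exists a constant c > 0, depending only on A, σ, C_M, C_λ, C_W and β₂, such that T(x, B(x,r)) ≥ c·W(x,r) for all x ∈ M \ N and all r ∈ (0, σR̄). -/
open Set Metric

/-- Conditions (λ_≤) and (E_M) (together with the eigenvalue–exit time inequality
`1 ≤ λ(B) · sup_B E[τ_B]`) imply the lower mean exit time estimate (E_≥). -/
theorem lambda_em_implies_e_lower {M : Type*} [MetricSpace M]
    -- diameter `R̄ ∈ (0,∞]`
    (hdiam_pos : 0 < EMetric.diam (Set.univ : Set M))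
    -- `W` is a scale function with constants `C_W ≥ 1`, `0 < β₁ ≤ β₂`
    (W : M → ℝ → ℝ) (C_W β₁ β₂ : ℝ)
    (hCW : 1 ≤ C_W) (hβ₁ : 0 < β₁) (hβ₁₂ : β₁ ≤ β₂)
    (hW0 : ∀ x, W x 0 = 0)
    (hWmono : ∀ x, StrictMonoOn (W x) (Set.Ici 0))
    (hWsurj : ∀ x : M, ∀ y : ℝ, 0 ≤ y → ∃ r : ℝ, 0 ≤ r ∧ W x r = y)
    (hWscale : ∀ x y : M, ∀ r R : ℝ, 0 < r → r ≤ R → dist x y ≤ R →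
      C_W⁻¹ * (R / r) ^ β₁ ≤ W x R / W y r ∧ W x R / W y r ≤ C_W * (R / r) ^ β₂)
    -- the exceptional set, exit-time functional, eigenvalue function and constants
    (N : Set M) (T : M → Set M → ENNReal) (lam : M → ℝ → ℝ)
    (hlam_nonneg : ∀ x : M, ∀ r : ℝ, 0 < r → 0 ≤ lam x r)
    (A σ C_M C_lam : ℝ)
    (hA : 1 < A) (hσ : σ ∈ Set.Ioo (0 : ℝ) 1) (hCM : 0 < C_M) (hClam : 0 < C_lam)
    -- (i) `1 ≤ λ(x,r) · sup_{y ∈ B(x,r)∖N} T(y,B(x,r))` for `r ∈ (0, σR̄/A)`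
    (hi : ∀ x, x ∉ N → ∀ r : ℝ, 0 < r →
      ENNReal.ofReal r < ENNReal.ofReal σ * EMetric.diam (Set.univ : Set M) /
        ENNReal.ofReal A →
      1 ≤ ENNReal.ofReal (lam x r) * ⨆ y ∈ Metric.ball x r \ N, T y (Metric.ball x r))
    -- (ii) `λ(x,r) ≤ C_λ / W(x,r)` for `r ∈ (0, σR̄)`
    (hii : ∀ x : M, ∀ r : ℝ, 0 < r →
      ENNReal.ofReal r < ENNReal.ofReal σ * EMetric.diam (Set.univ : Set M) →
      lam x r ≤ C_lam / W x r)
    -- (iii) condition (E_M) for `r ∈ (0, σR̄/A)`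
    (hiii : ∀ x, x ∉ N → ∀ r : ℝ, 0 < r →
      ENNReal.ofReal r < ENNReal.ofReal σ * EMetric.diam (Set.univ : Set M) /
        ENNReal.ofReal A →
      ENNReal.ofReal C_M * (⨆ y ∈ Metric.ball x r \ N, T y (Metric.ball x r)) ≤
        T x (Metric.ball x (A * r))) :
    ∃ c : ℝ, 0 < c ∧ ∀ x, x ∉ N → ∀ r : ℝ, 0 < r →
      ENNReal.ofReal r < ENNReal.ofReal σ * EMetric.diam (Set.univ : Set M) →
      ENNReal.ofReal (c * W x r) ≤ T x (Metric.ball x r) := by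
  have hA0 : (0:ℝ) < A := lt_trans one_pos hA
  have hCW0 : (0:ℝ) < C_W := lt_of_lt_of_le one_pos hCW
  have hApow : (0:ℝ) < A ^ β₂ := Real.rpow_pos_of_pos hA0 β₂
  refine ⟨C_M / (C_lam * C_W * A ^ β₂), by positivity, ?_⟩
  intro x hx r hr hrdiam
  set c : ℝ := C_M / (C_lam * C_W * A ^ β₂) with hc
  have hWpos : ∀ s : ℝ, 0 < s → 0 < W x s := fun s hs => by
    have := (hWmono x) (Set.mem_Ici.mpr le_rfl) (Set.mem_Ici.mpr hs.le) hs
    rwa [hW0 x] at this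
  set r' : ℝ := r / A with hr'def
  have hr' : 0 < r' := div_pos hr hA0
  have hr'lt : r' < r := by
    rw [hr'def, div_lt_iff₀ hA0]
    nlinarith
  have hAr' : A * r' = r := by rw [hr'def]; field_simp
  have hrd' : ENNReal.ofReal r' < ENNReal.ofReal σ *
      EMetric.diam (Set.univ : Set M) / ENNReal.ofReal A := by
    rw [hr'def, ENNReal.ofReal_div_of_pos hA0,
      ENNReal.lt_div_iff_mul_lt (Or.inl (by simp [hA0])) (Or.inl ENNReal.ofReal_ne_top),
      ENNReal.div_mul_cancel (by simp [hA0]) ENNReal.ofReal_ne_top]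
    exact hrdiam
  have hrd'' : ENNReal.ofReal r' < ENNReal.ofReal σ *
      EMetric.diam (Set.univ : Set M) :=
    lt_of_le_of_lt (ENNReal.ofReal_le_ofReal hr'lt.le) hrdiam
  set S : ENNReal := ⨆ y ∈ Metric.ball x r' \ N, T y (Metric.ball x r') with hS
  have h1 : 1 ≤ ENNReal.ofReal (lam x r') * S := hi x hx r' hr' hrd'
  have hlam_le : lam x r' ≤ C_lam / W x r' := hii x r' hr' hrd''
  have hquot : 0 < C_lam / W x r' := div_pos hClam (hWpos r' hr')
  set a : ENNReal := ENNReal.ofReal (C_lam / W x r') with ha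
  have ha0 : a ≠ 0 := by
    simp [ha, ENNReal.ofReal_pos.mpr hquot, ne_of_gt,
      (ENNReal.ofReal_pos.mpr hquot).ne']
  have hatop : a ≠ ⊤ := ENNReal.ofReal_ne_top
  have h1' : 1 ≤ a * S :=
    le_trans h1 (mul_le_mul_left (ENNReal.ofReal_le_ofReal hlam_le) S)
  have hSlb : ENNReal.ofReal (W x r' / C_lam) ≤ S := by
    have hinv : ENNReal.ofReal (W x r' / C_lam) = a⁻¹ := by
      rw [ha, ← ENNReal.ofReal_inv_of_pos hquot, inv_div]
    rw [hinv]
    calc a⁻¹ = a⁻¹ * 1 := (mul_one _).symm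
      _ ≤ a⁻¹ * (a * S) := mul_le_mul_right h1' _
      _ = (a⁻¹ * a) * S := (mul_assoc _ _ _).symm
      _ = S := by rw [ENNReal.inv_mul_cancel ha0 hatop, one_mul]
  have hT : ENNReal.ofReal C_M * S ≤ T x (Metric.ball x r) := by
    have := hiii x hx r' hr' hrd'
    rwa [hAr'] at this
  -- real inequality
  have hscale := (hWscale x x r' r hr' hr'lt.le (by simp [dist_self, hr.le])).2
  have hratio : r / r' = A := by
    rw [hr'def]; field_simp
  rw [hratio] at hscale
  have hWr' : 0 < W x r' := hWpos r' hr'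
  have hWub : W x r ≤ C_W * A ^ β₂ * W x r' := by
    rw [div_le_iff₀ hWr'] at hscale
    linarith
  have hreal : c * W x r ≤ C_M * (W x r' / C_lam) := by
    have h2 : c * W x r ≤ c * (C_W * A ^ β₂ * W x r') := by
      apply mul_le_mul_of_nonneg_left hWub (by positivity)
    have h3 : c * (C_W * A ^ β₂ * W x r') = C_M * (W x r' / C_lam) := by
      rw [hc]; field_simp
    linarith
  calc ENNReal.ofReal (c * W x r)
      ≤ ENNReal.ofReal (C_M * (W x r' / C_lam)) := ENNReal.ofReal_le_ofReal hreal
    _ = ENNReal.ofReal C_M * ENNReal.ofReal (W x r' / C_lam) :=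
        ENNReal.ofReal_mul hCM.le
    _ ≤ ENNReal.ofReal C_M * S := mul_le_mul_right hSlb _
    _ ≤ T x (Metric.ball x r) := hT
end

section
/- Let (M,d,μ) be a metric measure space with finite diameter R̄ := diam(M) ∈ (0,∞), where μ has full support and satisfies the volume doubling property with constant C_VD ∈ (1,∞). Let W be a scale function on (M,d) with constants C_W ≥ 1 and 0 < β₁ ≤ β₂, and set T₀ := inf_{x∈M} W(x,R̄). Let p : (0,∞) × M × M → [0,∞) be jointly measurable, symmetric (p_t(x,y) = p_t(y,x)), satisfy the semigroup property p_{s+t}(x,y) = ∫_M p_s(x,z)·p_t(z,y) μ(dz), satisfy the sub-Markov property ∫_M p_t(x,y) μ(dy) ≤ 1, and satisfy p_t(x,y) ≤ C₀ / ( √V(x,W^{-1}(x,t)) · √V(y,W^{-1}(y,t)) ) for all x,y ∈ M and all 0 < t ≤ T₀. Then there exists a constant C > 0, depending only on C₀, C_VD, C_W, β₁ and β₂, such that for every x ∈ M and every t ≥ T₀: ∫_E p_t(x,y) μ(dy) ≤ C·μ(E)/V(x,R̄) for every measurable set E ⊆ M, and consequently p_t(x,y) ≤ C/V(x,R̄)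 for μ-almost every y ∈ M. -/
open Set Metric MeasureTheory

private lemma doubling_iter' {M : Type*} [MetricSpace M] [MeasurableSpace M]
    (μ : Measure M) (C : ℝ)
    (h : ∀ x : M, ∀ r : ℝ, 0 < r →
      μ (Metric.ball x (2 * r)) ≤ ENNReal.ofReal C * μ (Metric.ball x r))
    (x : M) (r : ℝ) (hr : 0 < r) (k : ℕ) :
    μ (Metric.ball x (2 ^ k * r)) ≤ (ENNReal.ofReal C) ^ k * μ (Metric.ball x r) := by
  induction k with
  | zero => simp
  | succ k ih =>
    have h2 : (2:ℝ) ^ (k+1) * r = 2 * (2 ^ k * r) := by ring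
    rw [h2, pow_succ]
    calc μ (Metric.ball x (2 * (2 ^ k * r)))
        ≤ ENNReal.ofReal C * μ (Metric.ball x (2 ^ k * r)) := h x _ (by positivity)
      _ ≤ ENNReal.ofReal C * ((ENNReal.ofReal C) ^ k * μ (Metric.ball x r)) :=
          mul_le_mul_right ih _
      _ = (ENNReal.ofReal C) ^ k * ENNReal.ofReal C * μ (Metric.ball x r) := by ring

/-- Large-time heat kernel upper bound on a bounded metric measure space:
under (VD) and the near-diagonal upper estimate up to time `T₀ = inf_x W(x,R̄)`,
for `t ≥ T₀` one has `∫_E p_t(x,·) dμ ≤ C μ(E)/V(x,R̄)` and hence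
`p_t(x,y) ≤ C/V(x,R̄)` for μ-a.e. `y`. -/
theorem large_time_upper_bound {M : Type*} [MetricSpace M] [MeasurableSpace M] [BorelSpace M]
    [Nonempty M]
    (μ : Measure M)
    -- volume doubling with constant `C_VD ∈ (1,∞)` (in particular full support)
    (C_VD : ℝ) (hCVD : 1 < C_VD)
    (hVD : ∀ x : M, ∀ r : ℝ, 0 < r →
      0 < μ (Metric.ball x r) ∧
      μ (Metric.ball x (2 * r)) ≤ ENNReal.ofReal C_VD * μ (Metric.ball x r) ∧
      μ (Metric.ball x r) < ⊤)
    -- finite (positive) diameter `R̄ ∈ (0,∞)`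
    (hdiam_pos : 0 < EMetric.diam (Set.univ : Set M))
    (hdiam_fin : EMetric.diam (Set.univ : Set M) < ⊤)
    -- `W` is a scale function with constants `C_W ≥ 1`, `0 < β₁ ≤ β₂`, with inverse `Winv`
    (W Winv : M → ℝ → ℝ) (C_W β₁ β₂ : ℝ)
    (hCW : 1 ≤ C_W) (hβ₁ : 0 < β₁) (hβ₁₂ : β₁ ≤ β₂)
    (hW0 : ∀ x, W x 0 = 0)
    (hWmono : ∀ x, StrictMonoOn (W x) (Set.Ici 0))
    (hWsurj : ∀ x : M, ∀ y : ℝ, 0 ≤ y → ∃ r : ℝ, 0 ≤ r ∧ W x r = y)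
    (hWscale : ∀ x y : M, ∀ r R : ℝ, 0 < r → r ≤ R → dist x y ≤ R →
      C_W⁻¹ * (R / r) ^ β₁ ≤ W x R / W y r ∧ W x R / W y r ≤ C_W * (R / r) ^ β₂)
    (hWinv : ∀ x : M, ∀ t : ℝ, 0 ≤ t → 0 ≤ Winv x t ∧ W x (Winv x t) = t)
    -- the kernel `p`
    (p : ℝ → M → M → ENNReal)
    (hp_meas : Measurable fun z : ℝ × M × M => p z.1 z.2.1 z.2.2)
    (hp_fin : ∀ t : ℝ, ∀ x y : M, p t x y ≠ ⊤)
    (hp_symm : ∀ t : ℝ, ∀ x y : M, p t x y = p t y x)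
    (hp_semi : ∀ s t : ℝ, 0 < s → 0 < t → ∀ x y : M,
      p (s + t) x y = ∫⁻ z, p s x z * p t z y ∂μ)
    (hp_sub : ∀ t : ℝ, 0 < t → ∀ x : M, ∫⁻ y, p t x y ∂μ ≤ 1)
    -- near-diagonal upper estimate up to time `T₀ := inf_x W(x,R̄)`
    (C₀ : ℝ)
    (hp_due : ∀ x y : M, ∀ t : ℝ, 0 < t →
      t ≤ ⨅ z : M, W z (Metric.diam (Set.univ : Set M)) →
      p t x y ≤ ENNReal.ofReal C₀ /
        ((μ (Metric.ball x (Winv x t))) ^ (1 / 2 : ℝ) *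
          (μ (Metric.ball y (Winv y t))) ^ (1 / 2 : ℝ))) :
    ∃ C : ℝ, 0 < C ∧ ∀ x : M, ∀ t : ℝ,
      (⨅ z : M, W z (Metric.diam (Set.univ : Set M))) ≤ t →
      (∀ E : Set M, MeasurableSet E →
        ∫⁻ y in E, p t x y ∂μ ≤
          ENNReal.ofReal C * μ E / μ (Metric.ball x (Metric.diam (Set.univ : Set M)))) ∧
      (∀ᵐ y ∂μ, p t x y ≤
        ENNReal.ofReal C / μ (Metric.ball x (Metric.diam (Set.univ : Set M)))) := by
  set R : ℝ := Metric.diam (Set.univ : Set M) with hRdef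
  have hRpos : 0 < R := ENNReal.toReal_pos hdiam_pos.ne' hdiam_fin.ne
  have hbounded : Bornology.IsBounded (Set.univ : Set M) :=
    Metric.isBounded_iff_ediam_ne_top.mpr hdiam_fin.ne
  have hdist : ∀ x y : M, dist x y ≤ R := fun x y =>
    Metric.dist_le_diam_of_mem hbounded (mem_univ x) (mem_univ y)
  have hCWpos : (0:ℝ) < C_W := lt_of_lt_of_le one_pos hCW
  have hWpos : ∀ x : M, ∀ r : ℝ, 0 < r → 0 < W x r := by
    intro x r hr
    have := (hWmono x) Set.self_mem_Ici (Set.mem_Ici.mpr hr.le) hr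
    rwa [hW0 x] at this
  set T₀ : ℝ := ⨅ z : M, W z R with hT₀def
  have hbdd : BddBelow (Set.range fun z : M => W z R) := by
    refine ⟨0, ?_⟩
    rintro _ ⟨z, rfl⟩
    exact (hWpos z R hRpos).le
  have hT₀le : ∀ z : M, T₀ ≤ W z R := fun z => ciInf_le hbdd z
  have hlow : ∀ x : M, C_W⁻¹ * W x R ≤ T₀ := by
    intro x
    refine le_ciInf fun z => ?_
    have h := (hWscale z x R R hRpos le_rfl (hdist z x)).1
    rw [div_self hRpos.ne', Real.one_rpow, mul_one] at h
    exact (le_div_iff₀ (hWpos x R hRpos)).mp h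
  have hT₀pos : 0 < T₀ := by
    obtain ⟨x₀⟩ := (inferInstance : Nonempty M)
    have : 0 < C_W⁻¹ * W x₀ R := mul_pos (inv_pos.mpr hCWpos) (hWpos x₀ R hRpos)
    exact lt_of_lt_of_le this (hlow x₀)
  set s : ℝ := T₀ / 2 with hsdef
  have hs : 0 < s := by positivity
  have hsT : s ≤ T₀ := by linarith
  set D : ℝ := (2 * C_W ^ 2) ^ (1 / β₁ : ℝ) with hDdef
  have hbase1 : (1:ℝ) ≤ 2 * C_W ^ 2 := by nlinarith
  have hD1 : (1:ℝ) ≤ D := by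
    rw [hDdef]
    calc (1:ℝ) = 1 ^ (1/β₁ : ℝ) := (Real.one_rpow _).symm
      _ ≤ (2 * C_W ^ 2) ^ (1/β₁ : ℝ) :=
          Real.rpow_le_rpow zero_le_one hbase1 (by positivity)
  have hDpos : (0:ℝ) < D := lt_of_lt_of_le one_pos hD1
  -- lower bound for the inverse scale radius at time `s`
  have hr_low : ∀ x : M, 0 < Winv x s ∧ R / D ≤ Winv x s := by
    intro x
    obtain ⟨hr0, hWr⟩ := hWinv x s hs.le
    set r : ℝ := Winv x s with hrdef
    have hrpos : 0 < r := by
      rcases hr0.lt_or_eq with h | h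
      · exact h
      · exfalso; rw [← h, hW0] at hWr; linarith
    refine ⟨hrpos, ?_⟩
    rcases le_or_gt R r with h | h
    · calc R / D ≤ R / 1 := by
            apply div_le_div_of_nonneg_left hRpos.le one_pos hD1
        _ = R := div_one R
        _ ≤ r := h
    · -- r < R
      have hsc := (hWscale x x r R hrpos h.le (by rw [dist_self]; exact hRpos.le)).1
      rw [hWr] at hsc
      have hWxR : W x R ≤ C_W * T₀ := by
        have := hlow x
        calc W x R = C_W * (C_W⁻¹ * W x R) := by field_simp
          _ ≤ C_W * T₀ := by
              apply mul_le_mul_of_nonneg_left this hCWpos.le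
      have hquot : W x R / s ≤ 2 * C_W := by
        rw [hsdef, div_le_iff₀ hs]
        calc W x R ≤ C_W * T₀ := hWxR
          _ = 2 * C_W * (T₀ / 2) := by ring
      have hX : (R / r) ^ (β₁ : ℝ) ≤ 2 * C_W ^ 2 := by
        have h1 : C_W⁻¹ * (R / r) ^ (β₁ : ℝ) ≤ 2 * C_W := le_trans hsc hquot
        calc (R / r) ^ (β₁ : ℝ) = C_W * (C_W⁻¹ * (R / r) ^ (β₁ : ℝ)) := by field_simp
          _ ≤ C_W * (2 * C_W) := mul_le_mul_of_nonneg_left h1 hCWpos.le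
          _ = 2 * C_W ^ 2 := by ring
      have hRr_pos : 0 < R / r := by positivity
      have hRrD : R / r ≤ D := by
        have h2 : ((R / r) ^ (β₁ : ℝ)) ^ (1/β₁ : ℝ) ≤ (2 * C_W ^ 2) ^ (1/β₁ : ℝ) :=
          Real.rpow_le_rpow (by positivity) hX (by positivity)
        rwa [← Real.rpow_mul hRr_pos.le, mul_one_div, div_self hβ₁.ne',
          Real.rpow_one] at h2
      rw [div_le_iff₀ hrpos] at hRrD
      rw [div_le_iff₀ hDpos, mul_comm]
      exact hRrD
  -- doubling iteration
  have hdou : ∀ x : M, ∀ r : ℝ, 0 < r →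
      μ (Metric.ball x (2 * r)) ≤ ENNReal.ofReal C_VD * μ (Metric.ball x r) :=
    fun x r hr => (hVD x r hr).2.1
  obtain ⟨n, hn⟩ : ∃ n : ℕ, D < 2 ^ n := pow_unbounded_of_one_lt D one_lt_two
  set A : ENNReal := (ENNReal.ofReal C_VD) ^ (n + 1) with hAdef
  have hCVD0 : (0:ℝ) < C_VD := by linarith
  have hA0 : A ≠ 0 := by
    apply pow_ne_zero
    simpa [ENNReal.ofReal_pos] using hCVD0
  have hAtop : A ≠ ⊤ := by
    apply ENNReal.pow_ne_top
    exact ENNReal.ofReal_ne_top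
  refine ⟨max 1 (max C₀ 0 * C_VD ^ (n + 1)), lt_of_lt_of_le one_pos (le_max_left _ _), ?_⟩
  set C : ℝ := max 1 (max C₀ 0 * C_VD ^ (n + 1)) with hCdef
  intro x t ht
  set Vx : ENNReal := μ (Metric.ball x R) with hVxdef
  have hVx0 : Vx ≠ 0 := ((hVD x R hRpos).1).ne'
  have hVxtop : Vx ≠ ⊤ := ((hVD x R hRpos).2.2).ne
  set B : ENNReal := ENNReal.ofReal C / Vx with hBdef
  have hBtop : B ≠ ⊤ := (ENNReal.div_lt_top ENNReal.ofReal_ne_top hVx0).ne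
  -- key pointwise bound at time s
  have hkey : ∀ z : M, p s x z ≤ B := by
    intro z
    obtain ⟨hra_pos, hra⟩ := hr_low x
    obtain ⟨hrb_pos, hrb⟩ := hr_low z
    set Va : ENNReal := μ (Metric.ball x (Winv x s)) with hVadef
    set Vb : ENNReal := μ (Metric.ball z (Winv z s)) with hVbdef
    have hD2 : D ≤ 2 ^ (n+1) := by
      have : (2:ℝ) ^ n ≤ 2 ^ (n+1) := by
        apply pow_le_pow_right₀ (by norm_num) (Nat.le_succ n)
      linarith
    have hVleA : Vx ≤ A * Va := by
      have hrad : R ≤ 2 ^ (n+1) * Winv x s := by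
        have h1 : D * (R / D) ≤ 2 ^ (n+1) * Winv x s :=
          mul_le_mul hD2 hra (by positivity) (by positivity)
        rwa [mul_div_cancel₀ R hDpos.ne'] at h1
      calc Vx ≤ μ (Metric.ball x (2 ^ (n+1) * Winv x s)) :=
            measure_mono (Metric.ball_subset_ball hrad)
        _ ≤ A * Va := doubling_iter' μ C_VD hdou x _ hra_pos (n+1)
    have hVleB : Vx ≤ A * Vb := by
      have hsub : Metric.ball x R ⊆ Metric.ball z (2 * R) := by
        apply Metric.ball_subset_ball'
        have := hdist x z
        linarith
      have hrad : 2 * R ≤ 2 ^ (n+1) * Winv z s := by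
        have h1 : 2 * (D * (R / D)) ≤ 2 * (2 ^ n * Winv z s) := by
          apply mul_le_mul_of_nonneg_left _ (by norm_num)
          exact mul_le_mul hn.le hrb (by positivity) (by positivity)
        rw [mul_div_cancel₀ R hDpos.ne'] at h1
        calc 2 * R ≤ 2 * (2 ^ n * Winv z s) := h1
          _ = 2 ^ (n+1) * Winv z s := by ring
      calc Vx ≤ μ (Metric.ball z (2 * R)) := measure_mono hsub
        _ ≤ μ (Metric.ball z (2 ^ (n+1) * Winv z s)) :=
            measure_mono (Metric.ball_subset_ball hrad)
        _ ≤ A * Vb := doubling_iter' μ C_VD hdou z _ hrb_pos (n+1)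
    have hVa : Vx / A ≤ Va :=
      (ENNReal.div_le_iff_le_mul (Or.inl hA0) (Or.inl hAtop)).mpr
        (by rwa [mul_comm] at hVleA)
    have hVb : Vx / A ≤ Vb :=
      (ENNReal.div_le_iff_le_mul (Or.inl hA0) (Or.inl hAtop)).mpr
        (by rwa [mul_comm] at hVleB)
    have hQ0 : Vx / A ≠ 0 := by
      simp [ENNReal.div_eq_zero_iff, hVx0, hAtop]
    have hQtop : Vx / A ≠ ⊤ := (ENNReal.div_lt_top hVxtop hA0).ne
    have hQsq : (Vx / A) ^ (1/2 : ℝ) * (Vx / A) ^ (1/2 : ℝ) = Vx / A := by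
      rw [← ENNReal.rpow_add _ _ hQ0 hQtop]
      norm_num
    have hprod : Vx / A ≤ Va ^ (1/2 : ℝ) * Vb ^ (1/2 : ℝ) := by
      calc Vx / A = (Vx / A) ^ (1/2 : ℝ) * (Vx / A) ^ (1/2 : ℝ) := hQsq.symm
        _ ≤ Va ^ (1/2 : ℝ) * Vb ^ (1/2 : ℝ) :=
            mul_le_mul' (ENNReal.rpow_le_rpow hVa (by norm_num))
              (ENNReal.rpow_le_rpow hVb (by norm_num))
    have hnum : ENNReal.ofReal C₀ * A ≤ ENNReal.ofReal C := by
      have h1 : ENNReal.ofReal C₀ ≤ ENNReal.ofReal (max C₀ 0) :=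
        ENNReal.ofReal_le_ofReal (le_max_left _ _)
      have h2 : A = ENNReal.ofReal (C_VD ^ (n+1)) := by
        rw [ENNReal.ofReal_pow hCVD0.le]
      calc ENNReal.ofReal C₀ * A ≤ ENNReal.ofReal (max C₀ 0) * ENNReal.ofReal (C_VD ^ (n+1)) := by
            rw [h2]; exact mul_le_mul_left h1 _
        _ = ENNReal.ofReal (max C₀ 0 * C_VD ^ (n+1)) :=
            (ENNReal.ofReal_mul (le_max_right _ _)).symm
        _ ≤ ENNReal.ofReal C := ENNReal.ofReal_le_ofReal (le_max_right _ _)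
    calc p s x z ≤ ENNReal.ofReal C₀ / (Va ^ (1/2 : ℝ) * Vb ^ (1/2 : ℝ)) :=
          hp_due x z s hs hsT
      _ ≤ ENNReal.ofReal C₀ / (Vx / A) := ENNReal.div_le_div_left hprod _
      _ = ENNReal.ofReal C₀ * (A / Vx) := by
          rw [div_eq_mul_inv, ENNReal.inv_div (Or.inr hVxtop) (Or.inr hVx0)]
      _ = ENNReal.ofReal C₀ * A / Vx := by rw [mul_div_assoc]
      _ ≤ ENNReal.ofReal C / Vx := ENNReal.div_le_div_right hnum _
  -- large-time pointwise bound via the semigroup property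
  have hts : 0 < t - s := by
    have := hT₀pos
    rw [hsdef] at *
    linarith
  have hpt : ∀ y : M, p t x y ≤ B := by
    intro y
    have heq := hp_semi s (t - s) hs hts x y
    rw [show s + (t - s) = t by ring] at heq
    have hint : ∫⁻ z, p (t - s) z y ∂μ ≤ 1 := by
      calc ∫⁻ z, p (t - s) z y ∂μ = ∫⁻ z, p (t - s) y z ∂μ :=
            lintegral_congr fun z => hp_symm _ z y
        _ ≤ 1 := hp_sub (t - s) hts y
    calc p t x y = ∫⁻ z, p s x z * p (t - s) z y ∂μ := heq
      _ ≤ ∫⁻ z, B * p (t - s) z y ∂μ :=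
          lintegral_mono fun z => mul_le_mul_left (hkey z) _
      _ = B * ∫⁻ z, p (t - s) z y ∂μ := lintegral_const_mul' _ _ hBtop
      _ ≤ B * 1 := mul_le_mul_right hint _
      _ = B := mul_one B
  constructor
  · intro E _
    calc ∫⁻ y in E, p t x y ∂μ ≤ ∫⁻ _ in E, B ∂μ := lintegral_mono fun y => hpt y
      _ = B * μ E := setLIntegral_const E B
      _ = ENNReal.ofReal C * μ E / Vx := by
          rw [hBdef, div_eq_mul_inv, div_eq_mul_inv, mul_right_comm]
  · exact Filter.Eventually.of_forall fun y => hpt y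
end

section
/- Let (M,d,μ) be a metric measure space where μ has full support and satisfies the volume doubling property with constant C_VD ∈ (1,∞), and set α := log₂ C_VD. Let W be a scale function on (M,d) with constants C_W ≥ 1 and 0 < β₁ ≤ β₂. Let p : (0,∞) × M × M → [0,∞) be jointly measurable with p_t(x,y) ≤ C_UE · min( 1/V(x, W^{-1}(x,t)), t/( V(x,d(x,y)) · W(x,d(x,y)) ) ) for all t > 0 and all x,y ∈ M. Let D ⊆ M be measurable, let λ ≥ 0 and δ ∈ (0,1), and let q : (0,∞) × D × D → [0,∞) be jointly measurable such that for all t > 0 and x ∈ D: q_t(x,y) ≤ p_t(x,y) for all y ∈ D, ∫_D q_t(x,y) μ(dy) ≤ 1, and ∫_D q_t(x,y)² μ(dy) ≤ exp(−2(1−δ)tλ) · ∫_D q_{δt}(x,y)² μ(dy). Then for every ε ∈ (0, 2β₁/(α+2β₁)) there exists a constant C > 0, depending only on ε, δ, C_VD, C_UE, C_W, β₁ and β₂, such that ∫_D q_t(x,y) μ(dy) ≤ C · exp(−ε(1−δ)tλ) for all t > 0 and all x ∈ D. -/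
open Set Metric MeasureTheory

private lemma vd_iter {M : Type*} [MetricSpace M] [MeasurableSpace M]
    (μ : Measure M) {C_VD : ℝ} (hCVD : 1 < C_VD)
    (hdbl : ∀ (x : M) (r : ℝ), 0 < r →
      μ (Metric.ball x (2 * r)) ≤ ENNReal.ofReal C_VD * μ (Metric.ball x r))
    (x : M) {ρ R : ℝ} (hρ : 0 < ρ) (hρR : ρ ≤ R) :
    μ (Metric.ball x R) ≤
      ENNReal.ofReal (C_VD * (R / ρ) ^ Real.logb 2 C_VD) * μ (Metric.ball x ρ) := by
  have hCVD0 : (0:ℝ) < C_VD := lt_trans one_pos hCVD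
  have hpow : ∀ n : ℕ, μ (Metric.ball x (2 ^ n * ρ)) ≤
      ENNReal.ofReal (C_VD ^ n) * μ (Metric.ball x ρ) := by
    intro n
    induction n with
    | zero => simp
    | succ n ih =>
      have h2 : (2:ℝ) ^ (n+1) * ρ = 2 * (2 ^ n * ρ) := by ring
      calc μ (Metric.ball x ((2:ℝ) ^ (n+1) * ρ)) = μ (Metric.ball x (2 * ((2:ℝ) ^ n * ρ))) := by
            rw [h2]
        _ ≤ ENNReal.ofReal C_VD * μ (Metric.ball x ((2:ℝ) ^ n * ρ)) := hdbl x _ (by positivity)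
        _ ≤ ENNReal.ofReal C_VD * (ENNReal.ofReal (C_VD ^ n) * μ (Metric.ball x ρ)) :=
            mul_le_mul_right ih _
        _ = ENNReal.ofReal (C_VD ^ (n+1)) * μ (Metric.ball x ρ) := by
            rw [← mul_assoc, ← ENNReal.ofReal_mul hCVD0.le, pow_succ]
            ring_nf
  set s := R / ρ with hs
  have hs1 : 1 ≤ s := (one_le_div hρ).2 hρR
  have hs0 : 0 < s := lt_of_lt_of_le one_pos hs1
  set n := ⌈Real.logb 2 s⌉₊ with hn
  have hlogb0 : 0 ≤ Real.logb 2 s := Real.logb_nonneg one_lt_two hs1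
  have hRle : R ≤ 2 ^ n * ρ := by
    have h2 : s ≤ (2:ℝ) ^ (n:ℝ) := by
      calc s = (2:ℝ) ^ Real.logb 2 s := (Real.rpow_logb two_pos (by norm_num) hs0).symm
        _ ≤ (2:ℝ) ^ (n:ℝ) := Real.rpow_le_rpow_of_exponent_le one_le_two (Nat.le_ceil _)
    rw [Real.rpow_natCast] at h2
    have : R = s * ρ := by rw [hs, div_mul_cancel₀ R hρ.ne']
    rw [this]
    exact mul_le_mul_of_nonneg_right h2 hρ.le
  have hC : C_VD ^ n ≤ C_VD * s ^ Real.logb 2 C_VD := by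
    have h1 : (n:ℝ) ≤ Real.logb 2 s + 1 := (Nat.ceil_lt_add_one hlogb0).le
    calc C_VD ^ n = C_VD ^ (n:ℝ) := (Real.rpow_natCast _ n).symm
      _ ≤ C_VD ^ (Real.logb 2 s + 1) := Real.rpow_le_rpow_of_exponent_le hCVD.le h1
      _ = C_VD * C_VD ^ Real.logb 2 s := by rw [Real.rpow_add hCVD0, Real.rpow_one]; ring
      _ = C_VD * s ^ Real.logb 2 C_VD := by
          congr 1
          rw [Real.rpow_def_of_pos hCVD0, Real.rpow_def_of_pos hs0]
          congr 1
          simp only [Real.logb]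
          ring
  calc μ (Metric.ball x R) ≤ μ (Metric.ball x (2 ^ n * ρ)) :=
        measure_mono (Metric.ball_subset_ball hRle)
    _ ≤ ENNReal.ofReal (C_VD ^ n) * μ (Metric.ball x ρ) := hpow n
    _ ≤ ENNReal.ofReal (C_VD * s ^ Real.logb 2 C_VD) * μ (Metric.ball x ρ) :=
        mul_le_mul_left (ENNReal.ofReal_le_ofReal hC) _


private lemma tail_est {M : Type*} [MetricSpace M] [MeasurableSpace M]
    (μ : Measure M) {C_VD C_UE C_W β₁ : ℝ}
    (hCVD0 : 0 < C_VD) (hCUE : 0 < C_UE) (hCW0 : 0 < C_W) (hβ₁ : 0 < β₁)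
    (x : M)
    (hdbl : ∀ r : ℝ, 0 < r →
      μ (Metric.ball x (2 * r)) ≤ ENNReal.ofReal C_VD * μ (Metric.ball x r))
    (hball : ∀ s : ℝ, 0 < s → 0 < μ (Metric.ball x s) ∧ μ (Metric.ball x s) < ⊤)
    (w : ℝ → ℝ) {r t : ℝ} (hr : 0 < r) (ht : 0 < t)
    (hwr : 0 < w r)
    (hwmono : ∀ a b : ℝ, 0 < a → a ≤ b → w a ≤ w b)
    (hws : ∀ k : ℕ, C_W⁻¹ * ((2:ℝ) ^ k) ^ β₁ * w r ≤ w (2 ^ k * r))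
    (f : M → ENNReal)
    (hf : ∀ y : M, r ≤ dist y x → f y ≤ ENNReal.ofReal C_UE *
      (ENNReal.ofReal t / (μ (Metric.ball x (dist y x)) * ENNReal.ofReal (w (dist y x))))) :
    ∫⁻ y in (Metric.ball x r)ᶜ, f y ∂μ ≤
      ENNReal.ofReal (C_VD * C_UE * C_W * (1 - 2 ^ (-β₁))⁻¹ * (t / w r)) := by
  set A : ℕ → Set M := fun k => Metric.ball x (2 ^ (k+1) * r) \ Metric.ball x (2 ^ k * r) with hA
  -- covering
  have hcover : (Metric.ball x r)ᶜ ⊆ ⋃ k, A k := by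
    intro y hy
    have hd : r ≤ dist y x := not_lt.1 (fun h => hy (Metric.mem_ball.2 h))
    have hd0 : 0 < dist y x := lt_of_lt_of_le hr hd
    have hs1 : 1 ≤ dist y x / r := (one_le_div hr).2 hd
    set k := ⌊Real.logb 2 (dist y x / r)⌋₊ with hk
    have hlb0 : 0 ≤ Real.logb 2 (dist y x / r) := Real.logb_nonneg one_lt_two hs1
    refine Set.mem_iUnion.2 ⟨k, ?_, ?_⟩
    · -- dist y x < 2^(k+1) * r
      have h2 : dist y x / r < (2:ℝ) ^ ((k:ℝ) + 1) := by
        calc dist y x / r = (2:ℝ) ^ Real.logb 2 (dist y x / r) :=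
              (Real.rpow_logb two_pos (by norm_num) (by positivity)).symm
          _ < (2:ℝ) ^ ((k:ℝ) + 1) := by
              apply Real.rpow_lt_rpow_of_exponent_lt one_lt_two
              push_cast
              exact Nat.lt_floor_add_one _
      rw [show ((k:ℝ) + 1) = ((k+1 : ℕ) : ℝ) by push_cast; ring, Real.rpow_natCast] at h2
      have := (div_lt_iff₀ hr).1 h2
      exact Metric.mem_ball.2 (by linarith)
    · -- ¬ dist y x < 2^k * r
      intro hmem
      have h2 : (2:ℝ) ^ (k:ℝ) ≤ dist y x / r := by
        calc (2:ℝ) ^ (k:ℝ) ≤ (2:ℝ) ^ Real.logb 2 (dist y x / r) :=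
              Real.rpow_le_rpow_of_exponent_le one_le_two (Nat.floor_le hlb0)
          _ = dist y x / r := Real.rpow_logb two_pos (by norm_num) (by positivity)
      rw [Real.rpow_natCast] at h2
      have := (le_div_iff₀ hr).1 h2
      exact absurd (Metric.mem_ball.1 hmem) (not_lt.2 this)
  -- per-annulus bound
  have hbound : ∀ k : ℕ, ∫⁻ y in A k, f y ∂μ ≤
      ENNReal.ofReal (C_VD * C_UE * C_W * (t / w r) * ((2:ℝ) ^ (-β₁)) ^ k) := by
    intro k
    set s_k : ℝ := 2 ^ k * r with hsk
    have hsk0 : 0 < s_k := by positivity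
    have hwsk : 0 < w s_k := lt_of_lt_of_le (by positivity) (hws k)
    obtain ⟨hb0, hbt⟩ := hball s_k hsk0
    -- pointwise bound on the annulus
    have hpt : ∀ y ∈ A k, f y ≤ ENNReal.ofReal C_UE *
        (ENNReal.ofReal t / (μ (Metric.ball x s_k) * ENNReal.ofReal (w s_k))) := by
      intro y hy
      obtain ⟨hy1, hy2⟩ := hy
      have hdk : s_k ≤ dist y x := not_lt.1 (fun h => hy2 (Metric.mem_ball.2 h))
      have hdr : r ≤ dist y x := le_trans (le_mul_of_one_le_left hr.le (one_le_pow₀ one_le_two)) hdk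
      refine le_trans (hf y hdr) (mul_le_mul_right ?_ _)
      exact ENNReal.div_le_div le_rfl
        (mul_le_mul' (measure_mono (Metric.ball_subset_ball hdk))
          (ENNReal.ofReal_le_ofReal (hwmono s_k (dist y x) hsk0 hdk)))
    have hint : ∫⁻ y in A k, f y ∂μ ≤
        (ENNReal.ofReal C_UE * (ENNReal.ofReal t / (μ (Metric.ball x s_k) * ENNReal.ofReal (w s_k)))) *
          μ (A k) := by
      calc ∫⁻ y in A k, f y ∂μ ≤ ∫⁻ _ in A k,
            (ENNReal.ofReal C_UE * (ENNReal.ofReal t /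
              (μ (Metric.ball x s_k) * ENNReal.ofReal (w s_k)))) ∂μ :=
            setLIntegral_mono measurable_const hpt
        _ = _ := setLIntegral_const _ _
    have hAk : μ (A k) ≤ ENNReal.ofReal C_VD * μ (Metric.ball x s_k) := by
      calc μ (A k) ≤ μ (Metric.ball x (2 ^ (k+1) * r)) := measure_mono Set.diff_subset
        _ = μ (Metric.ball x (2 * s_k)) := by rw [hsk]; ring_nf
        _ ≤ ENNReal.ofReal C_VD * μ (Metric.ball x s_k) := hdbl s_k hsk0
    have hcomb : ∫⁻ y in A k, f y ∂μ ≤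
        ENNReal.ofReal (C_VD * C_UE * (t / w s_k)) := by
      refine le_trans hint ?_
      refine le_trans (mul_le_mul_right hAk _) ?_
      set b := μ (Metric.ball x s_k)
      have hbne : b ≠ 0 := hb0.ne'
      have hbnet : b ≠ ⊤ := hbt.ne
      have hkey : ENNReal.ofReal C_UE * (ENNReal.ofReal t / (b * ENNReal.ofReal (w s_k))) *
          (ENNReal.ofReal C_VD * b) =
          ENNReal.ofReal C_UE * ENNReal.ofReal C_VD *
            (ENNReal.ofReal t / ENNReal.ofReal (w s_k)) * (b * b⁻¹) := by
        rw [div_eq_mul_inv, div_eq_mul_inv, ENNReal.mul_inv (Or.inl hbne) (Or.inl hbnet)]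
        ring
      rw [hkey, ENNReal.mul_inv_cancel hbne hbnet, mul_one,
        ← ENNReal.ofReal_div_of_pos hwsk, ← ENNReal.ofReal_mul hCUE.le,
        ← ENNReal.ofReal_mul (by positivity)]
      apply ENNReal.ofReal_le_ofReal
      nlinarith [mul_pos hCUE (div_pos ht hwsk)]
    refine le_trans hcomb (ENNReal.ofReal_le_ofReal ?_)
    -- real estimate: t / w s_k ≤ C_W * (t / w r) * (2^(-β₁))^k
    have hlow : C_W⁻¹ * ((2:ℝ) ^ k) ^ β₁ * w r ≤ w s_k := hws k
    have hlowpos : 0 < C_W⁻¹ * ((2:ℝ) ^ k) ^ β₁ * w r := by positivity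
    have h1 : t / w s_k ≤ t / (C_W⁻¹ * ((2:ℝ) ^ k) ^ β₁ * w r) :=
      div_le_div_of_nonneg_left ht.le hlowpos hlow
    have h2 : t / (C_W⁻¹ * ((2:ℝ) ^ k) ^ β₁ * w r) = C_W * (t / w r) * ((2:ℝ) ^ (-β₁)) ^ k := by
      have e1 : ((2:ℝ) ^ (-β₁)) ^ k = ((2:ℝ) ^ k) ^ (-β₁) := by
        rw [← Real.rpow_natCast ((2:ℝ) ^ (-β₁)) k, ← Real.rpow_mul (by norm_num : (0:ℝ) ≤ 2),
          ← Real.rpow_natCast (2:ℝ) k, ← Real.rpow_mul (by norm_num : (0:ℝ) ≤ 2)]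
        ring_nf
      have e2 : ((2:ℝ) ^ k) ^ (-β₁) = (((2:ℝ) ^ k) ^ β₁)⁻¹ := by
        rw [Real.rpow_neg (by positivity)]
      have hp : (0:ℝ) < ((2:ℝ) ^ k) ^ β₁ := by positivity
      rw [e1, e2]
      field_simp
    calc C_VD * C_UE * (t / w s_k) ≤ C_VD * C_UE * (C_W * (t / w r) * ((2:ℝ) ^ (-β₁)) ^ k) := by
          rw [← h2]; nlinarith [mul_pos hCVD0 hCUE]
      _ = C_VD * C_UE * C_W * (t / w r) * ((2:ℝ) ^ (-β₁)) ^ k := by ring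
  -- sum up
  have ha0 : (0:ℝ) ≤ 2 ^ (-β₁) := Real.rpow_nonneg (by norm_num) _
  have ha1 : (2:ℝ) ^ (-β₁) < 1 :=
    Real.rpow_lt_one_of_one_lt_of_neg one_lt_two (neg_lt_zero.mpr hβ₁)
  have hKnn : 0 ≤ C_VD * C_UE * C_W * (t / w r) := by positivity
  calc ∫⁻ y in (Metric.ball x r)ᶜ, f y ∂μ ≤ ∫⁻ y in ⋃ k, A k, f y ∂μ :=
        lintegral_mono_set hcover
    _ ≤ ∑' k, ∫⁻ y in A k, f y ∂μ := lintegral_iUnion_le _ _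
    _ ≤ ∑' k, ENNReal.ofReal (C_VD * C_UE * C_W * (t / w r) * ((2:ℝ) ^ (-β₁)) ^ k) :=
        ENNReal.tsum_le_tsum hbound
    _ = ENNReal.ofReal (∑' k : ℕ, C_VD * C_UE * C_W * (t / w r) * ((2:ℝ) ^ (-β₁)) ^ k) :=
        (ENNReal.ofReal_tsum_of_nonneg (fun k => by positivity)
          ((summable_geometric_of_lt_one ha0 ha1).mul_left _)).symm
    _ = ENNReal.ofReal (C_VD * C_UE * C_W * (1 - 2 ^ (-β₁))⁻¹ * (t / w r)) := by
        rw [tsum_mul_left, tsum_geometric_of_lt_one ha0 ha1]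
        ring_nf


set_option maxHeartbeats 2000000 in
/-- Survival-probability type bound: under (VD), the stable-like upper bound (UE)
for `p`, and the spectral `L²`-decay for the Dirichlet kernel `q` of an open set `D`
with eigenvalue `λ`, one gets `∫_D q_t(x,·) dμ ≤ C exp(−ε(1−δ)tλ)` for every
`ε ∈ (0, 2β₁/(α+2β₁))`, where `α = log₂ C_VD`. -/
theorem survival_probability_upper_bound {M : Type*} [MetricSpace M] [MeasurableSpace M]
    [BorelSpace M]
    (μ : Measure M)
    -- volume doubling with constant `C_VD ∈ (1,∞)` (in particular full support)
    (C_VD : ℝ) (hCVD : 1 < C_VD)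
    (hVD : ∀ x : M, ∀ r : ℝ, 0 < r →
      0 < μ (Metric.ball x r) ∧
      μ (Metric.ball x (2 * r)) ≤ ENNReal.ofReal C_VD * μ (Metric.ball x r) ∧
      μ (Metric.ball x r) < ⊤)
    -- `W` is a scale function with constants `C_W ≥ 1`, `0 < β₁ ≤ β₂`, with inverse `Winv`
    (W Winv : M → ℝ → ℝ) (C_W β₁ β₂ : ℝ)
    (hCW : 1 ≤ C_W) (hβ₁ : 0 < β₁) (hβ₁₂ : β₁ ≤ β₂)
    (hW0 : ∀ x, W x 0 = 0)
    (hWmono : ∀ x, StrictMonoOn (W x) (Set.Ici 0))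
    (hWsurj : ∀ x : M, ∀ y : ℝ, 0 ≤ y → ∃ r : ℝ, 0 ≤ r ∧ W x r = y)
    (hWscale : ∀ x y : M, ∀ r R : ℝ, 0 < r → r ≤ R → dist x y ≤ R →
      C_W⁻¹ * (R / r) ^ β₁ ≤ W x R / W y r ∧ W x R / W y r ≤ C_W * (R / r) ^ β₂)
    (hWinv : ∀ x : M, ∀ t : ℝ, 0 ≤ t → 0 ≤ Winv x t ∧ W x (Winv x t) = t)
    -- the kernel `p` with stable-like upper bound (UE)
    (p : ℝ → M → M → ENNReal)
    (hp_meas : Measurable fun z : ℝ × M × M => p z.1 z.2.1 z.2.2)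
    (C_UE : ℝ) (hCUE : 0 < C_UE)
    (hp_ue : ∀ t : ℝ, 0 < t → ∀ x y : M,
      p t x y ≤ ENNReal.ofReal C_UE *
        min (μ (Metric.ball x (Winv x t)))⁻¹
          (ENNReal.ofReal t /
            (μ (Metric.ball x (dist x y)) * ENNReal.ofReal (W x (dist x y)))))
    -- the measurable set `D`, the eigenvalue `λ ≥ 0` and `δ ∈ (0,1)`
    (D : Set M) (hD : MeasurableSet D)
    (lam δ : ℝ) (hlam : 0 ≤ lam) (hδ : δ ∈ Set.Ioo (0 : ℝ) 1)
    -- the Dirichlet kernel `q` on `D`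
    (q : ℝ → M → M → ENNReal)
    (hq_meas : Measurable fun z : ℝ × M × M => q z.1 z.2.1 z.2.2)
    (hq_le : ∀ t : ℝ, 0 < t → ∀ x ∈ D, ∀ y ∈ D, q t x y ≤ p t x y)
    (hq_int : ∀ t : ℝ, 0 < t → ∀ x ∈ D, ∫⁻ y in D, q t x y ∂μ ≤ 1)
    (hq_spec : ∀ t : ℝ, 0 < t → ∀ x ∈ D,
      ∫⁻ y in D, q t x y ^ 2 ∂μ ≤
        ENNReal.ofReal (Real.exp (-2 * (1 - δ) * t * lam)) *
          ∫⁻ y in D, q (δ * t) x y ^ 2 ∂μ) :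
    ∀ ε ∈ Set.Ioo (0 : ℝ) (2 * β₁ / (Real.logb 2 C_VD + 2 * β₁)),
      ∃ C : ℝ, 0 < C ∧ ∀ t : ℝ, 0 < t → ∀ x ∈ D,
        ∫⁻ y in D, q t x y ∂μ ≤ ENNReal.ofReal (C * Real.exp (-ε * (1 - δ) * t * lam)) := by
  
  intro ε hε
  obtain ⟨hε0, hεlt⟩ := hε
  obtain ⟨hδ0, hδ1⟩ := hδ
  have hCVD0 : (0:ℝ) < C_VD := lt_trans one_pos hCVD
  have hCW0 : (0:ℝ) < C_W := lt_of_lt_of_le one_pos hCW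
  set α := Real.logb 2 C_VD with hαdef
  have hα0 : 0 < α := Real.logb_pos one_lt_two hCVD
  -- positivity of W on positives
  have hWpos : ∀ (z : M) (s : ℝ), 0 < s → 0 < W z s := by
    intro z s hs
    have h := hWmono z (Set.self_mem_Ici) (Set.mem_Ici.mpr hs.le) hs
    rwa [hW0 z] at h
  have hWle : ∀ (z : M) (a b : ℝ), 0 ≤ a → a ≤ b → W z a ≤ W z b := by
    intro z a b ha hab
    exact (hWmono z).monotoneOn (Set.mem_Ici.mpr ha) (Set.mem_Ici.mpr (ha.trans hab)) hab
  -- constants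
  have hgβ : (0:ℝ) < 1 - 2 ^ (-β₁) := by
    have := Real.rpow_lt_one_of_one_lt_of_neg one_lt_two (neg_lt_zero.mpr hβ₁)
    linarith
  set K1 := C_VD * C_UE * C_W * (1 - 2 ^ (-β₁))⁻¹ with hK1def
  have hK1 : 0 < K1 := by positivity
  set C₂ := (Real.exp 0 * C_UE * (C_VD * (C_W / δ) ^ (α / β₁))) ^ ((1:ℝ)/2) with hC₂def
  have hC₂ : 0 < C₂ := by positivity
  refine ⟨K1 + C₂, by positivity, ?_⟩
  intro t ht x hx
  set e := Real.exp (-ε * (1 - δ) * t * lam) with hedef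
  have he0 : 0 < e := Real.exp_pos _
  set Eexp := Real.exp (ε * (1 - δ) * t * lam) with hEdef
  have hE1 : 1 ≤ Eexp := Real.one_le_exp (mul_nonneg (mul_nonneg (mul_nonneg hε0.le (by linarith)) ht.le) hlam)
  have hE0 : 0 < Eexp := Real.exp_pos _
  have heE : e = Eexp⁻¹ := by
    rw [hedef, hEdef, ← Real.exp_neg]
    congr 1
    ring
  have hA0 : 0 < t * Eexp := by positivity
  -- radii
  obtain ⟨hr0, hWr⟩ := hWinv x (t * Eexp) hA0.le
  set r := Winv x (t * Eexp) with hrdef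
  have hr : 0 < r := by
    rcases hr0.lt_or_eq with h | h
    · exact h
    · exfalso; rw [← h, hW0] at hWr; linarith
  have hδt : 0 < δ * t := by positivity
  obtain ⟨hρ0, hWρ⟩ := hWinv x (δ * t) hδt.le
  set ρ := Winv x (δ * t) with hρdef
  have hρ : 0 < ρ := by
    rcases hρ0.lt_or_eq with h | h
    · exact h
    · exfalso; rw [← h, hW0] at hWρ; linarith
  have hρr : ρ ≤ r := by
    by_contra h
    push_neg at h
    have := hWmono x (Set.mem_Ici.mpr hr.le) (Set.mem_Ici.mpr hρ.le) h
    rw [hWr, hWρ] at this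
    nlinarith
  -- measurability of slices
  have hqy : ∀ (u : ℝ), Measurable (fun y => q u x y) := by
    intro u
    exact hq_meas.comp (measurable_const.prodMk (measurable_const.prodMk measurable_id))
  have hpy : Measurable (fun y => p t x y) :=
    hp_meas.comp (measurable_const.prodMk (measurable_const.prodMk measurable_id))
  -- ball positivity/finiteness
  obtain ⟨hbρ0, hbρd, hbρt⟩ := hVD x ρ hρ
  ----------------------------------------------------------------
  -- TAIL PART
  ----------------------------------------------------------------
  have hws : ∀ k : ℕ, C_W⁻¹ * ((2:ℝ) ^ k) ^ β₁ * W x r ≤ W x (2 ^ k * r) := by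
    intro k
    have hle : r ≤ 2 ^ k * r := le_mul_of_one_le_left hr.le (one_le_pow₀ one_le_two)
    have h := (hWscale x x r (2 ^ k * r) hr hle (by rw [dist_self]; positivity)).1
    have hq2 : (2:ℝ) ^ k * r / r = 2 ^ k := by field_simp
    rw [hq2] at h
    have hWrpos : 0 < W x r := hWpos x r hr
    calc C_W⁻¹ * ((2:ℝ) ^ k) ^ β₁ * W x r ≤ (W x (2 ^ k * r) / W x r) * W x r :=
        mul_le_mul_of_nonneg_right h hWrpos.le
      _ = W x (2 ^ k * r) := by field_simp
  have hf : ∀ y : M, r ≤ dist y x → p t x y ≤ ENNReal.ofReal C_UE *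
      (ENNReal.ofReal t / (μ (Metric.ball x (dist y x)) * ENNReal.ofReal (W x (dist y x)))) := by
    intro y _
    refine le_trans (hp_ue t ht x y) ?_
    rw [dist_comm y x]
    exact mul_le_mul_right (min_le_right _ _) _
  have htail : ∫⁻ y in (Metric.ball x r)ᶜ, p t x y ∂μ ≤ ENNReal.ofReal (K1 * (t / W x r)) := by
    exact tail_est μ hCVD0 hCUE hCW0 hβ₁ x (fun s hs => (hVD x s hs).2.1)
      (fun s hs => ⟨(hVD x s hs).1, (hVD x s hs).2.2⟩) (W x) hr ht (hWpos x r hr)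
      (fun a b ha hab => hWle x a b ha.le hab) hws (fun y => p t x y) hf
  have htWr : t / W x r = e := by
    rw [hWr, heE]
    field_simp
  have htail2 : ∫⁻ y in D \ Metric.ball x r, q t x y ∂μ ≤ ENNReal.ofReal (K1 * e) := by
    calc ∫⁻ y in D \ Metric.ball x r, q t x y ∂μ
        ≤ ∫⁻ y in D \ Metric.ball x r, p t x y ∂μ :=
          setLIntegral_mono hpy (fun y hy => hq_le t ht x hx y hy.1)
      _ ≤ ∫⁻ y in (Metric.ball x r)ᶜ, p t x y ∂μ :=
          lintegral_mono_set (fun y hy => hy.2)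
      _ ≤ ENNReal.ofReal (K1 * (t / W x r)) := htail
      _ = ENNReal.ofReal (K1 * e) := by rw [htWr]
  ----------------------------------------------------------------
  -- BALL PART
  ----------------------------------------------------------------
  set s := D ∩ Metric.ball x r with hsdef
  -- Cauchy-Schwarz
  have hH : ∫⁻ y in s, q t x y ∂μ ≤
      (∫⁻ y in s, q t x y ^ 2 ∂μ) ^ ((1:ℝ)/2) * (μ s) ^ ((1:ℝ)/2) := by
    have hconj : Real.HolderConjugate 2 2 := Real.holderConjugate_iff.mpr ⟨by norm_num, by norm_num⟩
    have h := ENNReal.lintegral_mul_le_Lp_mul_Lq (μ.restrict s) hconj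
      (f := fun y => q t x y) (g := fun _ => (1:ENNReal)) (hqy t).aemeasurable
      aemeasurable_const
    simp only [Pi.mul_apply, mul_one, one_mul, ENNReal.one_rpow, lintegral_const,
      Measure.restrict_apply MeasurableSet.univ, Set.univ_inter] at h
    have h2 : ∀ a : ENNReal, a ^ (2:ℝ) = a ^ (2:ℕ) := by
      intro a
      rw [← ENNReal.rpow_natCast]
      norm_num
    simp only [h2] at h
    exact h
  -- L² decay chain
  have hqp : ∀ y ∈ D, q (δ * t) x y ≤ ENNReal.ofReal C_UE * (μ (Metric.ball x ρ))⁻¹ := by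
    intro y hy
    refine le_trans (hq_le (δ * t) hδt x hx y hy)
      (le_trans (hp_ue (δ * t) hδt x y) (mul_le_mul_right (min_le_left _ _) _))
  have h4 : ∫⁻ y in D, q (δ * t) x y ^ 2 ∂μ ≤ ENNReal.ofReal C_UE * (μ (Metric.ball x ρ))⁻¹ := by
    calc ∫⁻ y in D, q (δ * t) x y ^ 2 ∂μ
        ≤ ∫⁻ y in D, (ENNReal.ofReal C_UE * (μ (Metric.ball x ρ))⁻¹) * q (δ * t) x y ∂μ := by
          refine setLIntegral_mono (((hqy (δ * t)).const_mul _)) ?_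
          intro y hy
          rw [pow_two]
          exact mul_le_mul_left (hqp y hy) _
      _ = (ENNReal.ofReal C_UE * (μ (Metric.ball x ρ))⁻¹) * ∫⁻ y in D, q (δ * t) x y ∂μ :=
          lintegral_const_mul _ (hqy (δ * t))
      _ ≤ (ENNReal.ofReal C_UE * (μ (Metric.ball x ρ))⁻¹) * 1 :=
          mul_le_mul_right (hq_int (δ * t) hδt x hx) _
      _ = ENNReal.ofReal C_UE * (μ (Metric.ball x ρ))⁻¹ := mul_one _
  have hq2bound : ∫⁻ y in s, q t x y ^ 2 ∂μ ≤
      ENNReal.ofReal (Real.exp (-2 * (1 - δ) * t * lam)) *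
        (ENNReal.ofReal C_UE * (μ (Metric.ball x ρ))⁻¹) := by
    calc ∫⁻ y in s, q t x y ^ 2 ∂μ ≤ ∫⁻ y in D, q t x y ^ 2 ∂μ :=
        lintegral_mono_set Set.inter_subset_left
      _ ≤ ENNReal.ofReal (Real.exp (-2 * (1 - δ) * t * lam)) *
            ∫⁻ y in D, q (δ * t) x y ^ 2 ∂μ := hq_spec t ht x hx
      _ ≤ _ := mul_le_mul_right h4 _
  have hμs : μ s ≤ ENNReal.ofReal (C_VD * (r / ρ) ^ α) * μ (Metric.ball x ρ) := by
    calc μ s ≤ μ (Metric.ball x r) := measure_mono Set.inter_subset_right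
      _ ≤ _ := vd_iter μ hCVD (fun z u hu => (hVD z u hu).2.1) x hρ hρr
  set X := Real.exp (-2 * (1 - δ) * t * lam) * C_UE * (C_VD * (r / ρ) ^ α) with hXdef
  have hX0 : 0 ≤ X := by positivity
  have hball1 : ∫⁻ y in s, q t x y ∂μ ≤ ENNReal.ofReal (X ^ ((1:ℝ)/2)) := by
    set b := μ (Metric.ball x ρ) with hbdef
    calc ∫⁻ y in s, q t x y ∂μ
        ≤ (∫⁻ y in s, q t x y ^ 2 ∂μ) ^ ((1:ℝ)/2) * (μ s) ^ ((1:ℝ)/2) := hH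
      _ ≤ (ENNReal.ofReal (Real.exp (-2 * (1 - δ) * t * lam)) *
            (ENNReal.ofReal C_UE * b⁻¹)) ^ ((1:ℝ)/2) *
          (ENNReal.ofReal (C_VD * (r / ρ) ^ α) * b) ^ ((1:ℝ)/2) :=
          mul_le_mul' (ENNReal.rpow_le_rpow hq2bound (by norm_num))
            (ENNReal.rpow_le_rpow hμs (by norm_num))
      _ = ((ENNReal.ofReal (Real.exp (-2 * (1 - δ) * t * lam)) *
            (ENNReal.ofReal C_UE * b⁻¹)) *
          (ENNReal.ofReal (C_VD * (r / ρ) ^ α) * b)) ^ ((1:ℝ)/2) :=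
          (ENNReal.mul_rpow_of_nonneg _ _ (by norm_num)).symm
      _ = (ENNReal.ofReal (Real.exp (-2 * (1 - δ) * t * lam)) * ENNReal.ofReal C_UE *
            ENNReal.ofReal (C_VD * (r / ρ) ^ α) * (b⁻¹ * b)) ^ ((1:ℝ)/2) := by
          ring_nf
      _ = (ENNReal.ofReal X) ^ ((1:ℝ)/2) := by
          rw [ENNReal.inv_mul_cancel hbρ0.ne' hbρt.ne, mul_one, hXdef,
            ← ENNReal.ofReal_mul (Real.exp_nonneg _), ← ENNReal.ofReal_mul (by positivity)]
      _ = ENNReal.ofReal (X ^ ((1:ℝ)/2)) := ENNReal.ofReal_rpow_of_nonneg hX0 (by norm_num)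
  -- real-number estimate for the ball part
  have hεkey : ε * α / (2 * β₁) + ε ≤ 1 := by
    have hden : 0 < α + 2 * β₁ := by linarith
    rw [lt_div_iff₀ hden] at hεlt
    have h2β : (0:ℝ) < 2 * β₁ := by linarith
    rw [div_add' _ _ _ h2β.ne', div_le_one h2β]
    nlinarith
  have hratio : (r / ρ) ^ α ≤ (C_W / δ) ^ (α / β₁) *
      Real.exp (ε * (1 - δ) * t * lam * (α / β₁)) := by
    have hrρ : 0 < r / ρ := div_pos hr hρ
    have hsc := (hWscale x x ρ r hρ hρr (by rw [dist_self]; exact hr.le)).1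
    rw [hWr, hWρ] at hsc
    have hWdiv : t * Eexp / (δ * t) = Eexp / δ := by
      field_simp
    rw [hWdiv] at hsc
    have h6 : (r / ρ) ^ β₁ ≤ C_W * (Eexp / δ) := by
      have h := mul_le_mul_of_nonneg_left hsc hCW0.le
      rwa [← mul_assoc, mul_inv_cancel₀ hCW0.ne', one_mul] at h
    have h7 : ((r / ρ) ^ β₁) ^ (α / β₁) ≤ (C_W * (Eexp / δ)) ^ (α / β₁) :=
      Real.rpow_le_rpow (by positivity) h6 (by positivity)
    have h8 : ((r / ρ) ^ β₁) ^ (α / β₁) = (r / ρ) ^ α := by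
      rw [← Real.rpow_mul hrρ.le]
      congr 1
      field_simp
    have h9 : (C_W * (Eexp / δ)) ^ (α / β₁) = (C_W / δ) ^ (α / β₁) * Eexp ^ (α / β₁) := by
      rw [show C_W * (Eexp / δ) = (C_W / δ) * Eexp by ring,
        Real.mul_rpow (by positivity) (Real.exp_nonneg _)]
    have h10 : Eexp ^ (α / β₁) = Real.exp (ε * (1 - δ) * t * lam * (α / β₁)) := by
      rw [hEdef, Real.rpow_def_of_pos (Real.exp_pos _), Real.log_exp]
    rw [h8, h9, h10] at h7
    exact h7
  have hreal : X ^ ((1:ℝ)/2) ≤ C₂ * e := by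
    set L := (1 - δ) * t * lam with hLdef
    have hL0 : 0 ≤ L := mul_nonneg (mul_nonneg (by linarith) ht.le) hlam
    have hXle : X ≤ (Real.exp 0 * C_UE * (C_VD * (C_W / δ) ^ (α / β₁))) *
        Real.exp (-2 * L + ε * L * (α / β₁)) := by
      rw [hXdef]
      have : Real.exp (-2 * (1 - δ) * t * lam) * C_UE * (C_VD * (r / ρ) ^ α) ≤
          Real.exp (-2 * (1 - δ) * t * lam) * C_UE *
            (C_VD * ((C_W / δ) ^ (α / β₁) * Real.exp (ε * (1 - δ) * t * lam * (α / β₁)))) := by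
        gcongr
      calc Real.exp (-2 * (1 - δ) * t * lam) * C_UE * (C_VD * (r / ρ) ^ α) ≤ _ := this
        _ = (Real.exp 0 * C_UE * (C_VD * (C_W / δ) ^ (α / β₁))) *
            Real.exp (-2 * L + ε * L * (α / β₁)) := by
          rw [Real.exp_zero, hLdef,
            show (-2*((1 - δ) * t * lam) + ε*((1 - δ) * t * lam)*(α/β₁)) =
              (-2*(1 - δ)*t*lam) + (ε*(1 - δ)*t*lam*(α/β₁)) by ring,
            Real.exp_add]
          ring
    calc X ^ ((1:ℝ)/2) ≤ ((Real.exp 0 * C_UE * (C_VD * (C_W / δ) ^ (α / β₁))) *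
          Real.exp (-2 * L + ε * L * (α / β₁))) ^ ((1:ℝ)/2) :=
        Real.rpow_le_rpow hX0 hXle (by norm_num)
      _ = C₂ * (Real.exp (-2 * L + ε * L * (α / β₁))) ^ ((1:ℝ)/2) := by
          rw [Real.mul_rpow (by positivity) (Real.exp_nonneg _), hC₂def]
      _ = C₂ * Real.exp ((-2 * L + ε * L * (α / β₁)) * ((1:ℝ)/2)) := by
          rw [Real.rpow_def_of_pos (Real.exp_pos _), Real.log_exp]
      _ ≤ C₂ * e := by
          refine mul_le_mul_of_nonneg_left ?_ hC₂.le
          rw [hedef]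
          apply Real.exp_le_exp.2
          have h2β : (0:ℝ) < 2 * β₁ := by linarith
          have key : ε * α / (2 * β₁) * L + ε * L ≤ L := by
            have := mul_le_mul_of_nonneg_right hεkey hL0
            nlinarith
          have hdiv : ε * L * (α / β₁) * (1/2) = ε * α / (2 * β₁) * L := by
            field_simp
          have hgoal : -ε * (1 - δ) * t * lam = -ε * L := by rw [hLdef]; ring
          rw [hgoal]
          nlinarith
  ----------------------------------------------------------------
  -- COMBINE
  ----------------------------------------------------------------
  have hsplit : ∫⁻ y in D, q t x y ∂μ =
      ∫⁻ y in s, q t x y ∂μ + ∫⁻ y in D \ Metric.ball x r, q t x y ∂μ :=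
    (lintegral_inter_add_diff (fun y => q t x y) D measurableSet_ball).symm
  rw [hsplit]
  calc ∫⁻ y in s, q t x y ∂μ + ∫⁻ y in D \ Metric.ball x r, q t x y ∂μ
      ≤ ENNReal.ofReal (C₂ * e) + ENNReal.ofReal (K1 * e) :=
        add_le_add (le_trans hball1 (ENNReal.ofReal_le_ofReal hreal)) htail2
    _ = ENNReal.ofReal ((K1 + C₂) * e) := by
        rw [← ENNReal.ofReal_add (by positivity) (by positivity)]
        ring_nf
end

section
/- Let (M,d,μ) be a metric measure space where μ has full support and satisfies the volume doubling property with constant C_VD ∈ (1,∞); set α := log₂ C_VD. Let β₁ > 0, let ε ∈ (0, 2β₁/(α+2β₁)), and set q := 2/(2−ε). Then there exists a constant C > 0, depending only on C_VD, β₁ and ε, such that for every x ∈ M and every ρ > 0, ∫_{M ∖ B(x,ρ)} V(x,d(x,y))^{−q(1−ε)} · (ρ/d(x,y))^{β₁ q(1−ε)} μ(dy) ≤ C · V(x,ρ)^{ε/(2−ε)}. -/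
open Set Metric MeasureTheory

/-- Tail-integral estimate under volume doubling: for `α = log₂ C_VD`,
`ε ∈ (0, 2β₁/(α+2β₁))` and `q = 2/(2−ε)`, one has
`∫_{M∖B(x,ρ)} V(x,d(x,y))^{−q(1−ε)} (ρ/d(x,y))^{β₁q(1−ε)} dμ(y) ≤ C V(x,ρ)^{ε/(2−ε)}`. -/
theorem tail_integral_estimate {M : Type*} [MetricSpace M] [MeasurableSpace M] [BorelSpace M]
    (μ : Measure M)
    -- volume doubling with constant `C_VD ∈ (1,∞)` (in particular full support)
    (C_VD : ℝ) (hCVD : 1 < C_VD)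
    (hVD : ∀ x : M, ∀ r : ℝ, 0 < r →
      0 < μ (Metric.ball x r) ∧
      μ (Metric.ball x (2 * r)) ≤ ENNReal.ofReal C_VD * μ (Metric.ball x r) ∧
      μ (Metric.ball x r) < ⊤)
    (β₁ ε : ℝ) (hβ₁ : 0 < β₁)
    (hε : ε ∈ Set.Ioo (0 : ℝ) (2 * β₁ / (Real.logb 2 C_VD + 2 * β₁))) :
    ∃ C : ℝ, 0 < C ∧ ∀ x : M, ∀ ρ : ℝ, 0 < ρ →
      ∫⁻ y in (Metric.ball x ρ)ᶜ,
          (μ (Metric.ball x (dist x y))) ^ (-(2 / (2 - ε) * (1 - ε))) *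
            ENNReal.ofReal ((ρ / dist x y) ^ (β₁ * (2 / (2 - ε)) * (1 - ε))) ∂μ ≤
        ENNReal.ofReal C * (μ (Metric.ball x ρ)) ^ (ε / (2 - ε)) := by
  obtain ⟨hε0, hεlt⟩ := hε
  have hC0 : (0:ℝ) < C_VD := lt_trans one_pos hCVD
  have hα0 : 0 < Real.logb 2 C_VD := Real.logb_pos one_lt_two hCVD
  set α := Real.logb 2 C_VD with hαdef
  have hden : 0 < α + 2*β₁ := by linarith
  have hε1 : ε < 1 := by
    have h1 : 2 * β₁ / (α + 2 * β₁) ≤ 1 := by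
      rw [div_le_one hden]; linarith
    linarith
  have h2ε : (0:ℝ) < 2 - ε := by linarith
  set e := ε / (2 - ε) with hedef
  have he0 : 0 < e := div_pos hε0 h2ε
  set q1 := 2 / (2 - ε) * (1 - ε) with hq1def
  have hq1 : 0 < q1 := by
    apply mul_pos (div_pos two_pos h2ε); linarith
  have hq1e : -q1 + 1 = e := by
    rw [hq1def, hedef]; field_simp; ring
  set b := β₁ * (2 / (2 - ε)) * (1 - ε) with hbdef
  have hb0 : 0 < b := by
    apply mul_pos (mul_pos hβ₁ (div_pos two_pos h2ε)); linarith
  -- the geometric ratio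
  set r := C_VD ^ e * (2:ℝ) ^ (-b) with hrdef
  have hr0 : 0 < r :=
    mul_pos (Real.rpow_pos_of_pos hC0 _) (Real.rpow_pos_of_pos two_pos _)
  have hr1 : r < 1 := by
    have h1 : ε * (α + 2 * β₁) < 2 * β₁ := (lt_div_iff₀ hden).mp hεlt
    have h2 : α * ε < 2 * β₁ * (1 - ε) := by nlinarith
    have hab : α * e < b := by
      have hb' : b = (2 * β₁ * (1 - ε)) / (2 - ε) := by rw [hbdef]; ring
      have he' : α * e = (α * ε) / (2 - ε) := by rw [hedef]; ring
      rw [hb', he']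
      exact (div_lt_div_iff₀ h2ε h2ε).mpr (by nlinarith)
    have hC2 : C_VD = (2:ℝ) ^ α := (Real.rpow_logb two_pos (by norm_num) hC0).symm
    have hr' : r = (2:ℝ) ^ (α * e - b) := by
      rw [hrdef, hC2, ← Real.rpow_mul (by norm_num : (0:ℝ) ≤ 2),
        ← Real.rpow_add two_pos, sub_eq_add_neg]
    rw [hr']
    exact Real.rpow_lt_one_of_one_lt_of_neg one_lt_two (by linarith)
  have h1r : 0 < 1 - r := by linarith
  refine ⟨C_VD * (1 - r)⁻¹, mul_pos hC0 (inv_pos.mpr h1r), ?_⟩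
  intro x ρ hρ
  set D : ℕ → ENNReal := fun n => μ (ball x (2 ^ n * ρ)) with hD
  have hRpos : ∀ n : ℕ, (0:ℝ) < 2 ^ n * ρ := fun n => by positivity
  have hDpos : ∀ n, D n ≠ 0 := fun n => (hVD x _ (hRpos n)).1.ne'
  have hDtop : ∀ n, D n ≠ ⊤ := fun n => (hVD x _ (hRpos n)).2.2.ne
  have hdoub : ∀ n, D (n+1) ≤ ENNReal.ofReal C_VD * D n := by
    intro n
    have h := (hVD x _ (hRpos n)).2.1
    simpa [hD, show (2:ℝ) * (2 ^ n * ρ) = 2 ^ (n+1) * ρ by ring] using h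
  have hiter : ∀ n, D n ≤ (ENNReal.ofReal C_VD) ^ n * D 0 := by
    intro n; induction n with
    | zero => simp
    | succ n ih =>
      calc D (n+1) ≤ ENNReal.ofReal C_VD * D n := hdoub n
        _ ≤ ENNReal.ofReal C_VD * ((ENNReal.ofReal C_VD) ^ n * D 0) :=
            mul_le_mul_right ih _
        _ = (ENNReal.ofReal C_VD) ^ (n+1) * D 0 := by ring
  set S : ℕ → Set M := fun n => ball x (2 ^ (n+1) * ρ) \ ball x (2 ^ n * ρ) with hS
  have hcover : (ball x ρ)ᶜ ⊆ ⋃ n, S n := by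
    intro y hy
    have hd : ρ ≤ dist y x := by
      simpa [mem_ball, not_lt] using hy
    have hdypos : 0 < dist y x := lt_of_lt_of_le hρ hd
    have hdρ : 1 ≤ dist y x / ρ := (one_le_div hρ).mpr hd
    set t := Real.logb 2 (dist y x / ρ) with htdef
    have ht0 : 0 ≤ t := Real.logb_nonneg one_lt_two hdρ
    have h2t : (2:ℝ) ^ t = dist y x / ρ :=
      Real.rpow_logb two_pos (by norm_num) (by positivity)
    refine mem_iUnion.mpr ⟨⌊t⌋₊, ?_, ?_⟩
    · -- y ∈ ball x (2^(⌊t⌋₊+1) * ρ)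
      have h3 : dist y x / ρ < (2:ℝ) ^ ((⌊t⌋₊:ℝ) + 1) := by
        rw [← h2t]
        exact Real.rpow_lt_rpow_of_exponent_lt one_lt_two (Nat.lt_floor_add_one t)
      have h3' : dist y x / ρ < (2:ℝ) ^ (⌊t⌋₊ + 1) := by
        rwa [show ((⌊t⌋₊:ℝ) + 1) = ((⌊t⌋₊ + 1 : ℕ) : ℝ) by push_cast; ring,
          Real.rpow_natCast] at h3
      have := (div_lt_iff₀ hρ).mp h3'
      simpa [mem_ball] using this
    · -- y ∉ ball x (2^⌊t⌋₊ * ρ)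
      have h2 : (2:ℝ) ^ (⌊t⌋₊:ℝ) ≤ dist y x / ρ := by
        rw [← h2t]
        exact Real.rpow_le_rpow_of_exponent_le one_le_two (Nat.floor_le ht0)
      have h2' : (2:ℝ) ^ ⌊t⌋₊ ≤ dist y x / ρ := by rwa [Real.rpow_natCast] at h2
      have := (le_div_iff₀ hρ).mp h2'
      simp [mem_ball, not_lt, this]
  have hterm : ∀ n : ℕ,
      ∫⁻ y in S n,
          (μ (ball x (dist x y))) ^ (-q1) * ENNReal.ofReal ((ρ / dist x y) ^ b) ∂μ ≤
        ENNReal.ofReal (C_VD * r ^ n) * (D 0) ^ e := by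
    intro n
    set c : ENNReal := (D n) ^ (-q1) * ENNReal.ofReal ((2:ℝ) ^ (-(n:ℝ) * b)) with hc
    have hconst : ∀ y ∈ S n,
        (μ (ball x (dist x y))) ^ (-q1) * ENNReal.ofReal ((ρ / dist x y) ^ b) ≤ c := by
      intro y hy
      obtain ⟨hy1, hy2⟩ := hy
      have hdy : 2 ^ n * ρ ≤ dist x y := by
        rw [dist_comm]
        simpa [mem_ball, not_lt] using hy2
      have hdy0 : 0 < dist x y := lt_of_lt_of_le (hRpos n) hdy
      have h1 : (μ (ball x (dist x y))) ^ (-q1) ≤ (D n) ^ (-q1) := by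
        rw [ENNReal.rpow_neg, ENNReal.rpow_neg]
        exact ENNReal.inv_le_inv.mpr
          (ENNReal.rpow_le_rpow (measure_mono (ball_subset_ball hdy)) hq1.le)
      have h2 : ENNReal.ofReal ((ρ / dist x y) ^ b) ≤
          ENNReal.ofReal ((2:ℝ) ^ (-(n:ℝ) * b)) := by
        apply ENNReal.ofReal_le_ofReal
        have hle : ρ / dist x y ≤ (2:ℝ) ^ (-(n:ℝ)) := by
          rw [Real.rpow_neg (by norm_num : (0:ℝ) ≤ 2), Real.rpow_natCast,
            div_le_iff₀ hdy0]
          calc ρ = ((2:ℝ) ^ n)⁻¹ * (2 ^ n * ρ) := by field_simp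
            _ ≤ ((2:ℝ) ^ n)⁻¹ * dist x y := by
                exact mul_le_mul_of_nonneg_left hdy (by positivity)
        calc (ρ / dist x y) ^ b ≤ ((2:ℝ) ^ (-(n:ℝ))) ^ b :=
              Real.rpow_le_rpow (by positivity) hle hb0.le
          _ = (2:ℝ) ^ (-(n:ℝ) * b) := by
              rw [← Real.rpow_mul (by norm_num : (0:ℝ) ≤ 2)]
      exact mul_le_mul' h1 h2
    have hμS : μ (S n) ≤ ENNReal.ofReal C_VD * D n :=
      le_trans (measure_mono diff_subset) (hdoub n)
    have hreal : (2:ℝ) ^ (-(n:ℝ) * b) * (C_VD ^ n) ^ e = r ^ n := by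
      rw [hrdef, mul_pow, ← Real.rpow_natCast (C_VD ^ e) n,
        ← Real.rpow_natCast ((2:ℝ) ^ (-b)) n,
        ← Real.rpow_mul hC0.le, ← Real.rpow_mul (by norm_num : (0:ℝ) ≤ 2),
        ← Real.rpow_natCast C_VD n, ← Real.rpow_mul hC0.le,
        show -(n:ℝ) * b = -b * (n:ℝ) by ring, show (n:ℝ) * e = e * (n:ℝ) by ring,
        mul_comm]
    calc ∫⁻ y in S n,
          (μ (ball x (dist x y))) ^ (-q1) * ENNReal.ofReal ((ρ / dist x y) ^ b) ∂μ
        ≤ ∫⁻ _ in S n, c ∂μ := setLIntegral_mono measurable_const hconst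
      _ = c * μ (S n) := setLIntegral_const _ _
      _ ≤ c * (ENNReal.ofReal C_VD * D n) := mul_le_mul_right hμS _
      _ = ENNReal.ofReal C_VD * ENNReal.ofReal ((2:ℝ) ^ (-(n:ℝ) * b)) *
            ((D n) ^ (-q1) * (D n) ^ (1:ℝ)) := by
          rw [hc, ENNReal.rpow_one]; ring
      _ = ENNReal.ofReal C_VD * ENNReal.ofReal ((2:ℝ) ^ (-(n:ℝ) * b)) * (D n) ^ e := by
          rw [← ENNReal.rpow_add _ _ (hDpos n) (hDtop n), hq1e]
      _ ≤ ENNReal.ofReal C_VD * ENNReal.ofReal ((2:ℝ) ^ (-(n:ℝ) * b)) *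
            ((ENNReal.ofReal C_VD) ^ n * D 0) ^ e :=
          mul_le_mul_right (ENNReal.rpow_le_rpow (hiter n) he0.le) _
      _ = ENNReal.ofReal (C_VD * r ^ n) * (D 0) ^ e := by
          rw [ENNReal.mul_rpow_of_nonneg _ _ he0.le, ← ENNReal.ofReal_pow hC0.le,
            ENNReal.ofReal_rpow_of_nonneg (by positivity) he0.le,
            ← ENNReal.ofReal_mul hC0.le, ← mul_assoc,
            ← ENNReal.ofReal_mul (by positivity), mul_assoc C_VD, hreal]
  have hsum : ∑' n : ℕ, ENNReal.ofReal (C_VD * r ^ n) * (D 0) ^ e ≤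
      ENNReal.ofReal (C_VD * (1 - r)⁻¹) * (D 0) ^ e := by
    rw [ENNReal.tsum_mul_right]
    refine mul_le_mul_left (le_of_eq ?_) _
    calc ∑' n : ℕ, ENNReal.ofReal (C_VD * r ^ n)
        = ∑' n : ℕ, ENNReal.ofReal C_VD * (ENNReal.ofReal r) ^ n := by
          congr 1; funext n
          rw [ENNReal.ofReal_mul hC0.le, ENNReal.ofReal_pow hr0.le]
      _ = ENNReal.ofReal C_VD * (1 - ENNReal.ofReal r)⁻¹ := by
          rw [ENNReal.tsum_mul_left, ENNReal.tsum_geometric]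
      _ = ENNReal.ofReal (C_VD * (1 - r)⁻¹) := by
          rw [ENNReal.ofReal_mul hC0.le, ENNReal.ofReal_inv_of_pos h1r,
            ENNReal.ofReal_sub 1 hr0.le, ENNReal.ofReal_one]
  have hD0 : D 0 = μ (ball x ρ) := by simp [hD]
  calc ∫⁻ y in (ball x ρ)ᶜ,
        (μ (ball x (dist x y))) ^ (-q1) * ENNReal.ofReal ((ρ / dist x y) ^ b) ∂μ
      ≤ ∫⁻ y in ⋃ n, S n,
        (μ (ball x (dist x y))) ^ (-q1) * ENNReal.ofReal ((ρ / dist x y) ^ b) ∂μ :=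
        lintegral_mono_set hcover
    _ ≤ ∑' n : ℕ, ∫⁻ y in S n,
        (μ (ball x (dist x y))) ^ (-q1) * ENNReal.ofReal ((ρ / dist x y) ^ b) ∂μ :=
        lintegral_iUnion_le _ _
    _ ≤ ∑' n : ℕ, ENNReal.ofReal (C_VD * r ^ n) * (D 0) ^ e :=
        ENNReal.tsum_le_tsum hterm
    _ ≤ ENNReal.ofReal (C_VD * (1 - r)⁻¹) * (D 0) ^ e := hsum
    _ = ENNReal.ofReal (C_VD * (1 - r)⁻¹) * (μ (ball x ρ)) ^ e := by rw [hD0]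
end

section
/- Let n > 0 be a real number, let 0 < s < 1, and set c₄ := √((n/2+1)/e). Then for all t > 0 and all r > 0, min( min(t^{−n/2}, t^{−n/(2s)}), t/(r^n·min(r², r^{2s})) ) ≥ (1/2) · min( min(t^{−n/2}, t^{−n/(2s)}), t^{−n/2}·exp(−c₄²·r²/t) + min(t^{−n/(2s)}, t/r^{n+2s}) ). -/
open Real

/-- The Chen–Kumagai upper bound implies the stable-like bound: for `c₄ = √((n/2+1)/e)`,
`min(min(t^{−n/2}, t^{−n/(2s)}), t/(rⁿ·min(r², r^{2s})))` dominates half of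
`min(min(t^{−n/2}, t^{−n/(2s)}), t^{−n/2}e^{−c₄²r²/t} + min(t^{−n/(2s)}, t/r^{n+2s}))`. -/
theorem stable_like_dominates_chen_kumagai (n s : ℝ) (hn : 0 < n)
    (hs : s ∈ Set.Ioo (0 : ℝ) 1) :
    ∀ t r : ℝ, 0 < t → 0 < r →
      (1 / 2) *
          min (min (t ^ (-n / 2)) (t ^ (-n / (2 * s))))
            (t ^ (-n / 2) *
                Real.exp (-(Real.sqrt ((n / 2 + 1) / Real.exp 1)) ^ 2 * r ^ (2 : ℝ) / t) +
              min (t ^ (-n / (2 * s))) (t / r ^ (n + 2 * s))) ≤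
        min (min (t ^ (-n / 2)) (t ^ (-n / (2 * s))))
          (t / (r ^ n * min (r ^ (2 : ℝ)) (r ^ (2 * s)))) := by
  obtain ⟨hs0, hs1⟩ := hs
  intro t r ht hr
  have hc : (Real.sqrt ((n / 2 + 1) / Real.exp 1)) ^ 2 = (n / 2 + 1) / Real.exp 1 :=
    Real.sq_sqrt (by positivity)
  rw [hc]
  set A := min (t ^ (-n / 2)) (t ^ (-n / (2 * s))) with hA
  set B := t ^ (-n / 2) *
      Real.exp (-((n / 2 + 1) / Real.exp 1) * r ^ (2 : ℝ) / t) with hB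
  set C := min (t ^ (-n / (2 * s))) (t / r ^ (n + 2 * s)) with hC
  set D := t / (r ^ n * min (r ^ (2 : ℝ)) (r ^ (2 * s))) with hD
  have hrn : (0:ℝ) < r ^ n := rpow_pos_of_pos hr n
  have hr2 : (0:ℝ) < r ^ (2:ℝ) := rpow_pos_of_pos hr 2
  have hr2s : (0:ℝ) < r ^ (2*s) := rpow_pos_of_pos hr _
  have hmin : (0:ℝ) < min (r ^ (2:ℝ)) (r ^ (2*s)) := lt_min hr2 hr2s
  have hApos : 0 < A := lt_min (rpow_pos_of_pos ht _) (rpow_pos_of_pos ht _)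
  have hBpos : 0 < B := mul_pos (rpow_pos_of_pos ht _) (Real.exp_pos _)
  have hCpos : 0 < C := lt_min (rpow_pos_of_pos ht _)
    (div_pos ht (rpow_pos_of_pos hr _))
  -- key analytic inequality : B ≤ t / r ^ (n+2)
  have hBle : B ≤ t / r ^ (n + 2 : ℝ) := by
    have he : (0:ℝ) < Real.exp 1 := Real.exp_pos 1
    have hx : (0:ℝ) < r ^ (2:ℝ) / t := by positivity
    have hlog : 2 * Real.log r - Real.log t ≤ (r ^ (2:ℝ) / t) / Real.exp 1 := by
      have h1 := Real.log_le_sub_one_of_pos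
        (show 0 < (r ^ (2:ℝ) / t) / Real.exp 1 by positivity)
      rw [Real.log_div (by positivity) (Real.exp_ne_zero 1), Real.log_exp,
          Real.log_div hr2.ne' ht.ne', Real.log_rpow hr] at h1
      linarith
    have hEt : t / r ^ (n + 2 : ℝ) =
        Real.exp (Real.log t - (n + 2) * Real.log r) := by
      rw [Real.exp_sub, Real.exp_log ht, ← Real.log_rpow hr (n + 2),
        Real.exp_log (rpow_pos_of_pos hr _)]
    have hEB : B = Real.exp (Real.log t * (-n / 2) +
        -((n / 2 + 1) / Real.exp 1) * r ^ (2:ℝ) / t) := by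
      rw [hB, Real.rpow_def_of_pos ht, ← Real.exp_add]
    rw [hEB, hEt]
    apply Real.exp_le_exp.2
    have hn2 : (0:ℝ) < n / 2 + 1 := by linarith
    have h2 := mul_le_mul_of_nonneg_left hlog hn2.le
    have h4 : -((n / 2 + 1) / Real.exp 1) * r ^ (2:ℝ) / t
        = -((n / 2 + 1) * (r ^ (2:ℝ) / t / Real.exp 1)) := by ring
    rw [h4]
    generalize r ^ (2:ℝ) / t / Real.exp 1 = X at h2 ⊢
    linarith [h2]
  have hBleD : B ≤ D := by
    have h1 : r ^ n * min (r ^ (2:ℝ)) (r ^ (2*s)) ≤ r ^ (n + 2 : ℝ) := by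
      rw [Real.rpow_add hr]
      exact mul_le_mul_of_nonneg_left (min_le_left _ _) hrn.le
    calc B ≤ t / r ^ (n + 2 : ℝ) := hBle
      _ ≤ D := by rw [hD]; gcongr
  have hCleD : C ≤ D := by
    have h1 : r ^ n * min (r ^ (2:ℝ)) (r ^ (2*s)) ≤ r ^ (n + 2 * s) := by
      rw [Real.rpow_add hr]
      exact mul_le_mul_of_nonneg_left (min_le_right _ _) hrn.le
    calc C ≤ t / r ^ (n + 2 * s) := min_le_right _ _
      _ ≤ D := by rw [hD]; gcongr
  have hmAB : min A B ≤ min A D := min_le_min le_rfl hBleD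
  have hmAC : min A C ≤ min A D := min_le_min le_rfl hCleD
  have hsplit : min A (B + C) ≤ min A B + min A C := by
    rcases le_total A B with h | h
    · rw [min_eq_left h]
      have h0 : 0 ≤ min A C := le_min hApos.le hCpos.le
      have := min_le_left A (B + C)
      linarith
    · rcases le_total A C with h' | h'
      · rw [min_eq_left h']
        have h0 : 0 ≤ min A B := le_min hApos.le hBpos.le
        have := min_le_left A (B + C)
        linarith
      · rw [min_eq_right h, min_eq_right h']
        exact min_le_right _ _
  linarith
end

section
/- Let n ≥ 1 be a natural number, let s ∈ (0,1) and c₀ > 0, and let p : (0,∞) × ℝⁿ × ℝⁿ → [0,∞) be a function satisfying p_t(x,y) ≥ c₀·t/|x−y|^{n+2s} for all t ∈ (0,1) and all x,y ∈ ℝⁿ with |x−y| > 1. Then for every β > 1 and all constants C > 0 and c > 0 there exist t ∈ (0,1) and x,y ∈ ℝⁿ with |x−y| > 1 such that p_t(x,y) > C·t^{−n/β}·exp(−c·(|x−y|^β/t)^{1/(β−1)}). -/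
open Real

/-- A kernel with a stable-like (polynomial) lower bound at large distances cannot
satisfy any sub-Gaussian upper bound
`p_t(x,y) ≤ C t^{−n/β} exp(−c(|x−y|^β/t)^{1/(β−1)})`. -/
theorem no_subgaussian_upper_bound (n : ℕ) (hn : 1 ≤ n) (s c₀ : ℝ)
    (hs : s ∈ Set.Ioo (0 : ℝ) 1) (hc₀ : 0 < c₀)
    (p : ℝ → EuclideanSpace ℝ (Fin n) → EuclideanSpace ℝ (Fin n) → ℝ)
    (hp_nonneg : ∀ t : ℝ, ∀ x y : EuclideanSpace ℝ (Fin n), 0 ≤ p t x y)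
    (hp_low : ∀ t ∈ Set.Ioo (0 : ℝ) 1, ∀ x y : EuclideanSpace ℝ (Fin n), 1 < dist x y →
      c₀ * t / dist x y ^ ((n : ℝ) + 2 * s) ≤ p t x y) :
    ∀ β : ℝ, 1 < β → ∀ C c : ℝ, 0 < C → 0 < c →
      ∃ t ∈ Set.Ioo (0 : ℝ) 1, ∃ x y : EuclideanSpace ℝ (Fin n), 1 < dist x y ∧
        C * t ^ (-(n : ℝ) / β) * Real.exp (-c * (dist x y ^ β / t) ^ (1 / (β - 1))) <
          p t x y := by
  intro β hβ C c hC hc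
  set t : ℝ := 1/2 with ht_def
  have ht : t ∈ Set.Ioo (0 : ℝ) 1 := by constructor <;> norm_num
  have hA : 0 < C * t ^ (-(n : ℝ) / β) := mul_pos hC (Real.rpow_pos_of_pos (by norm_num) _)
  set K : ℝ := c₀ * t / (C * t ^ (-(n : ℝ) / β)) with hK_def
  have hK : 0 < K := div_pos (mul_pos hc₀ ht.1) hA
  -- choose R large
  have htend := tendsto_rpow_mul_exp_neg_mul_atTop_nhds_zero ((n : ℝ) + 2 * s) c hc
  have hev : ∀ᶠ R in Filter.atTop,
      R ^ ((n : ℝ) + 2 * s) * Real.exp (-c * R) < K := by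
    have := htend.eventually (eventually_lt_nhds hK)
    simpa using this
  obtain ⟨R, hR⟩ := (hev.and (Filter.eventually_gt_atTop 1)).exists
  obtain ⟨hRK, hR1⟩ := hR
  have hR0 : (0 : ℝ) < R := lt_trans one_pos hR1
  -- construct points
  have hnpos : 0 < n := hn
  let i : Fin n := ⟨0, hnpos⟩
  refine ⟨t, ht, 0, EuclideanSpace.single i R, ?_, ?_⟩
  · rw [dist_comm, dist_zero_right, EuclideanSpace.norm_single, Real.norm_eq_abs]
    rwa [abs_of_pos hR0]
  · have hd : dist (0 : EuclideanSpace ℝ (Fin n)) (EuclideanSpace.single i R) = R := by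
      rw [dist_comm, dist_zero_right, EuclideanSpace.norm_single, Real.norm_eq_abs, abs_of_pos hR0]
    rw [hd]
    have hdist : (1 : ℝ) < dist (0 : EuclideanSpace ℝ (Fin n)) (EuclideanSpace.single i R) := by
      rw [hd]; exact hR1
    have hlow := hp_low t ht 0 (EuclideanSpace.single i R) hdist
    rw [hd] at hlow
    refine lt_of_lt_of_le ?_ hlow
    -- key inequality
    have hX : R ≤ (R ^ β / t) ^ (1 / (β - 1)) := by
      have h1 : R ^ (β - 1) ≤ R ^ β / t := by
        have h2 : R ^ (β - 1) ≤ R ^ β :=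
          Real.rpow_le_rpow_of_exponent_le hR1.le (by linarith)
        have h3 : R ^ β ≤ R ^ β / t := by
          rw [ht_def]
          have : (0:ℝ) < R ^ β := Real.rpow_pos_of_pos hR0 _
          rw [div_eq_mul_inv]
          nlinarith
        linarith
      have heq : (R ^ (β - 1)) ^ (1 / (β - 1)) = R := by
        rw [← Real.rpow_mul hR0.le, mul_one_div_cancel (by linarith : β - 1 ≠ 0),
          Real.rpow_one]
      calc R = (R ^ (β - 1)) ^ (1 / (β - 1)) := heq.symm
        _ ≤ (R ^ β / t) ^ (1 / (β - 1)) :=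
              Real.rpow_le_rpow (Real.rpow_nonneg hR0.le _) h1
                (div_nonneg one_pos.le (by linarith))
    have hexp : Real.exp (-c * (R ^ β / t) ^ (1 / (β - 1))) ≤ Real.exp (-c * R) := by
      apply Real.exp_le_exp.2
      have := mul_le_mul_of_nonneg_left hX hc.le
      linarith
    have hRpow : (0:ℝ) < R ^ ((n : ℝ) + 2 * s) := Real.rpow_pos_of_pos hR0 _
    calc C * t ^ (-(n : ℝ) / β) * Real.exp (-c * (R ^ β / t) ^ (1 / (β - 1)))
        ≤ C * t ^ (-(n : ℝ) / β) * Real.exp (-c * R) :=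
          mul_le_mul_of_nonneg_left hexp hA.le
      _ < c₀ * t / R ^ ((n : ℝ) + 2 * s) := by
          rw [hK_def] at hRK
          rw [lt_div_iff₀ hRpow]
          have := mul_lt_mul_of_pos_right hRK hA
          rw [div_mul_cancel₀ _ (ne_of_gt hA)] at this
          nlinarith [Real.exp_pos (-c * R)]
end
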